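/- arXiv:2309.03206 — 5 statements merged into one kernel-verified Lean document; each statement's English description precedes it below -/
import Mathlib

section
/- Let C be an isodual binary linear code of length n, let σ ∈ S_n be such that C^⊥ = C^σ, let X = {1,…,n}, and let G = Aut(C). Suppose that the action of G on the set of t-element subsets of X has exactly two orbits, GT_1 and GT_2, and that (GT_1)^σ = GT_2. Then the polynomial J_{C,T} + J_{C^⊥,T} is the same for every t-element subset T of X; in fact, for every t-element subset T, J_{C,T} + J_{C^⊥,T} = J_{C,T_1} + J_{C,T_2}. -/
/-- Hamming weight of a binary vector. -/
def wt {n : ℕ} (c : Fin n → ZMod 2) : ℕ :=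
  (Finset.univ.filter fun i => c i ≠ 0).card

/-- Support of a binary vector, as a finset of coordinates. -/
def suppF {n : ℕ} (c : Fin n → ZMod 2) : Finset (Fin n) :=
  Finset.univ.filter fun i => c i ≠ 0

/-- Dual code w.r.t. the standard inner product on `F₂ⁿ`. -/
def dualCode {n : ℕ} (C : Set (Fin n → ZMod 2)) : Set (Fin n → ZMod 2) :=
  {y | ∀ x ∈ C, ∑ i, x i * y i = 0}

/-- The code `C^σ = {(c_{σ(1)},…,c_{σ(n)}) : c ∈ C}`. -/
def permCode {n : ℕ} (σ : Equiv.Perm (Fin n)) (C : Set (Fin n → ZMod 2)) :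
    Set (Fin n → ZMod 2) :=
  (fun c => c ∘ σ) '' C

/-- Automorphism group (as a set of permutations) of a code: `Aut(C) = {σ : C^σ = C}`. -/
def autCode {n : ℕ} (C : Set (Fin n → ZMod 2)) : Set (Equiv.Perm (Fin n)) :=
  {σ | permCode σ C = C}

/-- Jacobi polynomial `J_{C,T}` in the variables `w = X 0`, `z = X 1`, `x = X 2`, `y = X 3`:
`J_{C,T} = ∑_{c ∈ C} w^{m₀(c)} z^{m₁(c)} x^{n₀(c)} y^{n₁(c)}`. -/
noncomputable def jacobiPoly {n : ℕ} (C : Set (Fin n → ZMod 2)) (T : Finset (Fin n)) :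
    MvPolynomial (Fin 4) ℤ :=
  ∑ c ∈ C.toFinite.toFinset,
    MvPolynomial.X 0 ^ (T.filter fun j => c j = 0).card *
      MvPolynomial.X 1 ^ (T.filter fun j => c j = 1).card *
      MvPolynomial.X 2 ^ (Tᶜ.filter fun j => c j = 0).card *
      MvPolynomial.X 3 ^ (Tᶜ.filter fun j => c j = 1).card

/-- The orbit `GT = {T^σ : σ ∈ G}` of a finset `T` under a set `G` of permutations. -/
def orbitT {n : ℕ} (G : Set (Equiv.Perm (Fin n))) (T : Finset (Fin n)) :
    Set (Finset (Fin n)) :=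
  {S | ∃ σ ∈ G, T.image σ = S}


lemma compl_image_perm {n : ℕ} (σ : Equiv.Perm (Fin n)) (T : Finset (Fin n)) :
    (T.image σ)ᶜ = Tᶜ.image σ := by
  ext j
  simp only [Finset.mem_compl, Finset.mem_image]
  constructor
  · intro h
    exact ⟨σ.symm j, fun hm => h ⟨σ.symm j, hm, by simp⟩, by simp⟩
  · rintro ⟨a, ha, rfl⟩ ⟨b, hb, hba⟩
    exact ha (σ.injective hba ▸ hb)

lemma filter_card_perm {n : ℕ} (σ : Equiv.Perm (Fin n)) (T : Finset (Fin n))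
    (c : Fin n → ZMod 2) (v : ZMod 2) :
    (T.filter fun j => (c ∘ σ) j = v).card = ((T.image σ).filter fun j => c j = v).card := by
  rw [Finset.filter_image, Finset.card_image_of_injective _ σ.injective]
  rfl

lemma jacobi_permCode {n : ℕ} (σ : Equiv.Perm (Fin n)) (C : Set (Fin n → ZMod 2))
    (T : Finset (Fin n)) :
    jacobiPoly (permCode σ C) T = jacobiPoly C (T.image σ) := by
  unfold jacobiPoly
  refine Finset.sum_bij (fun c _ => c ∘ σ) ?_ ?_ ?_ ?_ |>.symm
  · intro c hc
    simp only [Set.Finite.mem_toFinset] at hc ⊢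
    exact ⟨c, hc, rfl⟩
  · intro a _ b _ h
    have := congrArg (fun f => f ∘ ⇑σ.symm) h
    simpa [Function.comp_assoc] using this
  · intro b hb
    simp only [Set.Finite.mem_toFinset] at hb
    obtain ⟨c, hc, rfl⟩ := hb
    exact ⟨c, Set.Finite.mem_toFinset _ |>.mpr hc, rfl⟩
  · intro c _
    rw [filter_card_perm σ T c 0, filter_card_perm σ T c 1,
      filter_card_perm σ Tᶜ c 0, filter_card_perm σ Tᶜ c 1, ← compl_image_perm]

lemma jacobi_orbit {n : ℕ} {C : Set (Fin n → ZMod 2)} {T S : Finset (Fin n)}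
    (h : S ∈ orbitT (autCode C) T) : jacobiPoly C S = jacobiPoly C T := by
  obtain ⟨τ, hτ, rfl⟩ := h
  rw [← jacobi_permCode τ C T, hτ]

/-- For an isodual binary linear code `C` with `C^⊥ = C^σ`, if `Aut(C)` has
exactly two orbits `GT₁ ⊔ GT₂` on `t`-element subsets and `(GT₁)^σ = GT₂`, then
`J_{C,T} + J_{C^⊥,T}` is independent of the `t`-subset `T`; indeed it always equals
`J_{C,T₁} + J_{C,T₂}`. -/
theorem jacobi_sum_independent {n t : ℕ} (C : Submodule (ZMod 2) (Fin n → ZMod 2))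
    (σ : Equiv.Perm (Fin n)) (hσ : dualCode ↑C = permCode σ ↑C)
    (T₁ T₂ : Finset (Fin n)) (hT₁ : T₁.card = t) (hT₂ : T₂.card = t)
    (hcover : ∀ T : Finset (Fin n), T.card = t →
      T ∈ orbitT (autCode ↑C) T₁ ∨ T ∈ orbitT (autCode ↑C) T₂)
    (hdisj : Disjoint (orbitT (autCode ↑C) T₁) (orbitT (autCode ↑C) T₂))
    (horb : (fun S : Finset (Fin n) => S.image σ) '' orbitT (autCode ↑C) T₁
      = orbitT (autCode ↑C) T₂) :
    ∀ T : Finset (Fin n), T.card = t →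
      jacobiPoly ↑C T + jacobiPoly (dualCode ↑C) T
        = jacobiPoly ↑C T₁ + jacobiPoly ↑C T₂ := by
  intro T hT
  have hdual : jacobiPoly (dualCode ↑C) T = jacobiPoly ↑C (T.image σ) := by
    rw [hσ, jacobi_permCode]
  rcases hcover T hT with h | h
  · have h2 : T.image σ ∈ orbitT (autCode ↑C) T₂ := horb ▸ ⟨T, h, rfl⟩
    rw [hdual, jacobi_orbit h, jacobi_orbit h2]
  · have hc : (T.image σ).card = t := by
      rw [Finset.card_image_of_injective _ σ.injective, hT]
    have h1 : T.image σ ∈ orbitT (autCode ↑C) T₁ := by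
      rcases hcover _ hc with h1 | h2
      · exact h1
      · exfalso
        rw [← horb] at h2
        obtain ⟨S, hS, hSe⟩ := h2
        have hST : S = T := Finset.image_injective σ.injective hSe
        exact Set.disjoint_left.mp hdisj (hST ▸ hS) h
    rw [hdual, jacobi_orbit h, jacobi_orbit h1, add_comm]
end

section
/- Let C be a binary linear code of length n and let ℓ, t ∈ ℕ with t ≤ ℓ. Then the shell C_ℓ is a combinatorial t-design if and only if the coefficient of the monomial w^0 z^t x^{n−ℓ} y^{ℓ−t} in the Jacobi polynomial J_{C,T}(w,z,x,y) is independent of the choice of the subset T ⊆ {1,…,n} with |T| = t. -/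
/-- The shell `C_ℓ` of weight-`ℓ` elements of a code `C`. -/
def shell {n : ℕ} (C : Set (Fin n → ZMod 2)) (ℓ : ℕ) : Set (Fin n → ZMod 2) :=
  {c | c ∈ C ∧ wt c = ℓ}

/-- A combinatorial `t`-`(n, ℓ, lam)` design with point set `Fin n` and block collection `B`:
all blocks have `ℓ` elements, and every `t`-element subset of the point set is contained in
exactly `lam` blocks. -/
def IsDesign (n t ℓ lam : ℕ) (B : Finset (Finset (Fin n))) : Prop :=
  (∀ b ∈ B, b.card = ℓ) ∧
    ∀ S : Finset (Fin n), S.card = t → (B.filter fun b => S ⊆ b).card = lam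

/-- The block collection `B(C_ℓ) = {supp(x) : x ∈ C_ℓ}` of a shell. -/
noncomputable def shellBlocks {n : ℕ} (C : Set (Fin n → ZMod 2)) (ℓ : ℕ) :
    Finset (Finset (Fin n)) :=
  (shell C ℓ).toFinite.toFinset.image suppF

lemma zmod2_cases (a : ZMod 2) : a = 0 ∨ a = 1 := by revert a; decide

lemma suppF_inj {n : ℕ} : Function.Injective (suppF (n := n)) := by
  intro c d h
  funext i
  have hm : (c i ≠ 0) ↔ (d i ≠ 0) := by
    have := Finset.ext_iff.mp h i
    simpa [suppF] using this
  rcases zmod2_cases (c i) with hc | hc <;> rcases zmod2_cases (d i) with hd | hd <;>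
    simp [hc, hd] at hm ⊢

lemma monomial_eq_aux (a b c d : ℕ) :
    (MvPolynomial.X (0 : Fin 4) ^ a * MvPolynomial.X 1 ^ b * MvPolynomial.X 2 ^ c *
        MvPolynomial.X 3 ^ d : MvPolynomial (Fin 4) ℤ)
      = MvPolynomial.monomial
          (Finsupp.single 0 a + Finsupp.single 1 b + Finsupp.single 2 c + Finsupp.single 3 d)
          1 := by
  simp [MvPolynomial.X_pow_eq_monomial, MvPolynomial.monomial_mul]

lemma finsupp_eq_aux (a b c d t u v : ℕ) :
    (Finsupp.single (0 : Fin 4) a + Finsupp.single 1 b + Finsupp.single 2 c +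
        Finsupp.single 3 d
      = Finsupp.single (1 : Fin 4) t + Finsupp.single 2 u + Finsupp.single 3 v)
      ↔ (a = 0 ∧ b = t ∧ c = u ∧ d = v) := by
  constructor
  · intro h
    have h0 := DFunLike.congr_fun h 0
    have h1 := DFunLike.congr_fun h 1
    have h2 := DFunLike.congr_fun h 2
    have h3 := DFunLike.congr_fun h 3
    simp [Finsupp.single_apply] at h0 h1 h2 h3
    exact ⟨h0, h1, h2, h3⟩
  · rintro ⟨rfl, rfl, rfl, rfl⟩
    simp

lemma exps_eq_iff {n ℓ t : ℕ} (T : Finset (Fin n)) (c : Fin n → ZMod 2)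
    (hT : T.card = t) (htℓ : t ≤ ℓ) :
    (Finsupp.single (0 : Fin 4) (T.filter fun j => c j = 0).card +
        Finsupp.single 1 (T.filter fun j => c j = 1).card +
        Finsupp.single 2 (Tᶜ.filter fun j => c j = 0).card +
        Finsupp.single 3 (Tᶜ.filter fun j => c j = 1).card
      = Finsupp.single 1 t + Finsupp.single 2 (n - ℓ) + Finsupp.single 3 (ℓ - t))
      ↔ (wt c = ℓ ∧ T ⊆ suppF c) := by
  classical
  rw [finsupp_eq_aux]
  have hne : ∀ a : ZMod 2, (¬ a = 0) ↔ a = 1 := by decide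
  have hfilt : ∀ s : Finset (Fin n),
      (s.filter fun j => ¬ c j = 0) = s.filter fun j => c j = 1 := by
    intro s; exact Finset.filter_congr fun j _ => hne (c j)
  have hm : (T.filter fun j => c j = 0).card + (T.filter fun j => c j = 1).card = t := by
    rw [← hfilt T, Finset.card_filter_add_card_filter_not, hT]
  have hn : (Tᶜ.filter fun j => c j = 0).card + (Tᶜ.filter fun j => c j = 1).card = n - t := by
    rw [← hfilt Tᶜ, Finset.card_filter_add_card_filter_not, Finset.card_compl, hT,
      Fintype.card_fin]
  have hw : wt c = (T.filter fun j => c j = 1).card + (Tᶜ.filter fun j => c j = 1).card := by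
    rw [wt, show (Finset.univ : Finset (Fin n)) = T ∪ Tᶜ by simp, Finset.filter_union,
      Finset.card_union_of_disjoint
        (Finset.disjoint_filter_filter disjoint_compl_right)]
    congr 1 <;> exact congrArg Finset.card (hfilt _)
  have hwn : wt c ≤ n := by
    rw [wt]
    simpa using Finset.card_filter_le (Finset.univ : Finset (Fin n)) fun i => c i ≠ 0
  have hsub : T ⊆ suppF c ↔ (T.filter fun j => c j = 0).card = 0 := by
    rw [Finset.card_eq_zero, Finset.filter_eq_empty_iff]
    constructor
    · intro hs j hj
      have := hs hj
      simp [suppF] at this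
      exact fun h0 => this h0
    · intro hs j hj
      simp [suppF]
      exact hs hj
  rw [hsub, hw]
  omega

/-- For a binary linear code `C` of length `n` and `t ≤ ℓ`, the shell `C_ℓ`
is a combinatorial `t`-design iff the coefficient of `w^0 z^t x^{n-ℓ} y^{ℓ-t}` in `J_{C,T}`
is independent of the choice of the `t`-subset `T`. -/
theorem shell_design_iff_jacobi_coeff {n ℓ t : ℕ}
    (C : Submodule (ZMod 2) (Fin n → ZMod 2)) (htℓ : t ≤ ℓ) :
    (∃ lam : ℕ, IsDesign n t ℓ lam (shellBlocks ↑C ℓ)) ↔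
      ∀ T T' : Finset (Fin n), T.card = t → T'.card = t →
        MvPolynomial.coeff
          (Finsupp.single 1 t + Finsupp.single 2 (n - ℓ) + Finsupp.single 3 (ℓ - t))
          (jacobiPoly ↑C T)
        = MvPolynomial.coeff
          (Finsupp.single 1 t + Finsupp.single 2 (n - ℓ) + Finsupp.single 3 (ℓ - t))
          (jacobiPoly ↑C T') := by
  classical
  have hcount : ∀ T : Finset (Fin n), T.card = t →
      MvPolynomial.coeff
        (Finsupp.single 1 t + Finsupp.single 2 (n - ℓ) + Finsupp.single 3 (ℓ - t))
        (jacobiPoly ↑C T)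
      = (((C : Set (Fin n → ZMod 2)).toFinite.toFinset.filter
          fun c => wt c = ℓ ∧ T ⊆ suppF c).card : ℤ) := by
    intro T hT
    rw [jacobiPoly, MvPolynomial.coeff_sum]
    rw [show (((C : Set (Fin n → ZMod 2)).toFinite.toFinset.filter
          fun c => wt c = ℓ ∧ T ⊆ suppF c).card : ℤ)
        = ∑ c ∈ (C : Set (Fin n → ZMod 2)).toFinite.toFinset,
            (if wt c = ℓ ∧ T ⊆ suppF c then 1 else 0) by
      exact (Finset.sum_boole _ _).symm]
    refine Finset.sum_congr rfl fun c _ => ?_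
    rw [monomial_eq_aux, MvPolynomial.coeff_monomial]
    simp only [exps_eq_iff T c hT htℓ]
  have hblocks : ∀ S : Finset (Fin n),
      ((shellBlocks ↑C ℓ).filter fun b => S ⊆ b).card
      = ((C : Set (Fin n → ZMod 2)).toFinite.toFinset.filter
          fun c => wt c = ℓ ∧ S ⊆ suppF c).card := by
    intro S
    rw [shellBlocks, Finset.filter_image, Finset.card_image_of_injective _ suppF_inj]
    congr 1
    ext c
    simp only [Finset.mem_filter, Set.Finite.mem_toFinset, shell, Set.mem_setOf_eq,
      SetLike.mem_coe, and_assoc]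
  have hsize : ∀ b ∈ shellBlocks (C : Set (Fin n → ZMod 2)) ℓ, b.card = ℓ := by
    intro b hb
    rw [shellBlocks] at hb
    obtain ⟨c, hc, rfl⟩ := Finset.mem_image.mp hb
    rw [Set.Finite.mem_toFinset] at hc
    exact hc.2
  constructor
  · rintro ⟨lam, -, hdes⟩ T T' hT hT'
    rw [hcount T hT, hcount T' hT', ← hblocks T, ← hblocks T', hdes T hT, hdes T' hT']
  · intro H
    by_cases ht : ∃ S : Finset (Fin n), S.card = t
    · obtain ⟨S₀, hS₀⟩ := ht
      refine ⟨((shellBlocks ↑C ℓ).filter fun b => S₀ ⊆ b).card, hsize, fun S hS => ?_⟩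
      have := H S S₀ hS hS₀
      rw [hcount S hS, hcount S₀ hS₀] at this
      rw [hblocks S, hblocks S₀]
      exact_mod_cast this
    · exact ⟨0, hsize, fun S hS => absurd ⟨S, hS⟩ ht⟩
end

section
/- Let p be a prime with p ≡ 1 (mod 8) and let Q̃_{p+1} be the extended binary quadratic residue code of length p+1. Then for every ℓ ∈ ℕ, whenever the shell (Q̃_{p+1})_ℓ is non-empty, it is a combinatorial 2-design: (Ω, {supp(x) : x ∈ (Q̃_{p+1})_ℓ}) is a 2-(p+1, ℓ, λ) design for some λ. The same holds for every non-empty shell of the dual code Q̃_{p+1}^⊥. -/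
/-- The binary quadratic residue code of length `p`: the codewords are the coefficient vectors
of the polynomials of degree `< p` over `F₂` that vanish at `α^ℓ` for every nonzero quadratic
residue `ℓ` mod `p`, where `α` is a fixed primitive `p`-th root of unity in an extension field
`K` of `F₂`; equivalently (for prime `p ≡ ±1 mod 8`), the cyclic code of length `p` with
generator polynomial `∏_{ℓ ∈ (F_p^*)²} (x - α^ℓ)`. -/
def QRCode (p : ℕ) (K : Type*) [Field K] [CharP K 2] (α : K) : Set (Fin p → ZMod 2) :=
  {c | ∀ ℓ : ZMod p, (∃ m : ZMod p, m ≠ 0 ∧ m ^ 2 = ℓ) →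
    ∑ i : Fin p, (ZMod.castHom (dvd_refl 2) K (c i)) * α ^ ((i : ℕ) * ℓ.val) = 0}

/-- The extended binary quadratic residue code of length `p + 1`, obtained from `Q_p` by
appending an overall parity-check coordinate. -/
def extQRCode (p : ℕ) (K : Type*) [Field K] [CharP K 2] (α : K) :
    Set (Fin (p + 1) → ZMod 2) :=
  {c | (fun i : Fin p => c i.castSucc) ∈ QRCode p K α ∧ ∑ i, c i = 0}

namespace QRAux14

open Finset

variable {p : ℕ}

def em [NeZero p] : Fin (p + 1) ≃ Option (ZMod p) where
  toFun i := if h : (i : ℕ) < p then some ((i : ℕ) : ZMod p) else none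
  invFun o :=
    o.elim (Fin.last p) fun x =>
      ⟨x.val, (ZMod.val_lt x).trans (Nat.lt_succ_self p)⟩
  left_inv i := by
    by_cases h : (i : ℕ) < p
    · simp only [dif_pos h, Option.elim]
      ext
      simp [ZMod.val_natCast, Nat.mod_eq_of_lt h]
    · have hi : (i : ℕ) = p := by omega
      simp only [dif_neg h, Option.elim]
      ext
      simp [Fin.last, hi]
  right_inv o := by
    cases o with
    | none =>
      simp only [Option.elim]
      exact dif_neg (lt_irrefl p)
    | some x =>
      simp only [Option.elim]
      exact (dif_pos (ZMod.val_lt x)).trans (congrArg some (ZMod.natCast_rightInverse x))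

lemma em_symm_none [NeZero p] : (em (p := p)).symm none = Fin.last p := rfl

lemma em_symm_some [NeZero p] (x : ZMod p) :
    (em (p := p)).symm (some x) = ⟨x.val, (ZMod.val_lt x).trans (Nat.lt_succ_self p)⟩ := rfl

def tau (b : ZMod p) : Equiv.Perm (Option (ZMod p)) := Equiv.optionCongr (Equiv.addRight b)

@[simp] lemma tau_none (b : ZMod p) : tau b none = none := rfl
@[simp] lemma tau_some (b x : ZMod p) : tau b (some x) = some (x + b) := rfl

def rhoFun : Option (ZMod p) → Option (ZMod p)
  | none => some 0
  | some x => if x = 0 then none else some (-x⁻¹)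

lemma rhoFun_involutive (hp : p.Prime) : Function.Involutive (rhoFun (p := p)) := by
  haveI : Fact p.Prime := ⟨hp⟩
  intro o
  cases o with
  | none => simp [rhoFun]
  | some x =>
    by_cases hx : x = 0
    · simp [rhoFun, hx]
    · have h1 : -x⁻¹ ≠ 0 := neg_ne_zero.mpr (inv_ne_zero hx)
      simp [rhoFun, hx, h1, inv_neg, inv_inv]

def rho (hp : p.Prime) : Equiv.Perm (Option (ZMod p)) :=
  Function.Involutive.toPerm _ (rhoFun_involutive hp)

@[simp] lemma rho_apply (hp : p.Prime) (o : Option (ZMod p)) : rho hp o = rhoFun o := rfl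


variable {p : ℕ} {K : Type*} [Field K]

def AA [NeZero p] (α : K) (z : ZMod p) : K := α ^ z.val

lemma AA_natCast [NeZero p] {α : K} (hα : orderOf α = p) (n : ℕ) :
    AA α ((n : ZMod p)) = α ^ n := by
  rw [AA, ZMod.val_natCast, ← hα, pow_mod_orderOf]

@[simp] lemma AA_zero [NeZero p] {α : K} : AA α (0 : ZMod p) = 1 := by
  rw [AA, ZMod.val_zero, pow_zero]

lemma AA_add [NeZero p] {α : K} (hα : orderOf α = p) (x y : ZMod p) :
    AA α (x + y) = AA α x * AA α y := by
  have h : x + y = ((x.val + y.val : ℕ) : ZMod p) := by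
    push_cast [ZMod.natCast_val, ZMod.cast_id]
    ring
  rw [h, AA_natCast hα, pow_add]
  rfl

lemma cast_p_eq_one [CharP K 2] (hodd : p % 2 = 1) : (p : K) = 1 := by
  have h2 : (2 : K) = 0 := by exact_mod_cast CharP.cast_eq_zero K 2
  conv_lhs => rw [← Nat.div_add_mod p 2, hodd]
  push_cast
  rw [h2]
  ring

lemma sum_zmod_val [NeZero p] (f : ℕ → K) :
    ∑ z : ZMod p, f z.val = ∑ m ∈ Finset.range p, f m := by
  refine Finset.sum_nbij' (i := fun z => z.val) (j := fun m => (m : ZMod p)) ?_ ?_ ?_ ?_ ?_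
  · intro a _
    exact Finset.mem_range.mpr (ZMod.val_lt a)
  · intro a _
    exact Finset.mem_univ _
  · intro a _
    exact ZMod.natCast_rightInverse a
  · intro a ha
    exact ZMod.val_natCast_of_lt (Finset.mem_range.mp ha)
  · intro a _
    rfl

lemma sum_AA [NeZero p] [CharP K 2] (hp : p.Prime) (hodd : p % 2 = 1) {α : K}
    (hα : orderOf α = p) (c : ZMod p) :
    ∑ x : ZMod p, AA α (c * x) = if c = 0 then 1 else 0 := by
  haveI : Fact p.Prime := ⟨hp⟩
  by_cases hc : c = 0
  · rw [if_pos hc]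
    subst hc
    simp only [zero_mul, AA_zero]
    rw [Finset.sum_const, Finset.card_univ, ZMod.card, nsmul_eq_mul, mul_one,
      cast_p_eq_one hodd]
  · rw [if_neg hc]
    have hre : ∑ x : ZMod p, AA α (c * x) = ∑ z : ZMod p, AA α z := by
      apply Finset.sum_nbij' (i := fun x => c * x) (j := fun z => c⁻¹ * z)
      · intro a _; exact Finset.mem_univ _
      · intro a _; exact Finset.mem_univ _
      · intro a _; field_simp
      · intro a _; field_simp
      · intro a _; rfl
    rw [hre]
    have hone : α ≠ 1 := by
      intro h
      rw [h, orderOf_one] at hα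
      exact (Nat.Prime.one_lt hp).ne hα
    have hsum : ∑ z : ZMod p, AA α z = ∑ m ∈ Finset.range p, α ^ m :=
      sum_zmod_val (fun m => α ^ m)
    rw [hsum]
    have hgeom := geom_sum_mul α p
    have hap : α ^ p = 1 := by rw [← hα]; exact pow_orderOf_eq_one α
    rw [hap, sub_self] at hgeom
    rcases mul_eq_zero.mp hgeom with h | h
    · exact h
    · exact absurd (sub_eq_zero.mp h) hone

lemma fourier [NeZero p] [CharP K 2] (hp : p.Prime) (hodd : p % 2 = 1) {α : K}
    (hα : orderOf α = p) (a : ZMod p → K) (j : ZMod p) :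
    ∑ y : ZMod p, (∑ x : ZMod p, a x * AA α (x * y)) * AA α (-(j * y)) = a j := by
  have step1 : ∀ y : ZMod p, (∑ x : ZMod p, a x * AA α (x * y)) * AA α (-(j * y))
      = ∑ x : ZMod p, a x * AA α ((x - j) * y) := by
    intro y
    rw [Finset.sum_mul]
    refine Finset.sum_congr rfl fun x _ => ?_
    rw [mul_assoc, ← AA_add hα]
    congr 2
    ring
  rw [Finset.sum_congr rfl fun y _ => step1 y, Finset.sum_comm]
  have step2 : ∀ x : ZMod p, ∑ y : ZMod p, a x * AA α ((x - j) * y)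
      = if x = j then a x else 0 := by
    intro x
    rw [← Finset.mul_sum, sum_AA hp hodd hα]
    by_cases h : x = j
    · simp [h, sub_eq_zero]
    · rw [if_neg (by simpa [sub_eq_zero] using h), if_neg h, mul_zero]
  rw [Finset.sum_congr rfl fun x _ => step2 x, Finset.sum_ite_eq' Finset.univ j a,
    if_pos (Finset.mem_univ j)]


section Cond

variable {p : ℕ} {K : Type*} [Field K] [CharP K 2]

def isQR (ℓ : ZMod p) : Prop := ∃ m : ZMod p, m ≠ 0 ∧ m ^ 2 = ℓ

lemma isQR_ne_zero (hp : p.Prime) {ℓ : ZMod p} (h : isQR ℓ) : ℓ ≠ 0 := by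
  haveI : Fact p.Prime := ⟨hp⟩
  obtain ⟨m, hm, rfl⟩ := h
  exact pow_ne_zero 2 hm

def cond [NeZero p] (α : K) (f : Option (ZMod p) → K) : Prop :=
  (∀ ℓ : ZMod p, isQR ℓ → ∑ x : ZMod p, f (some x) * AA α (x * ℓ) = 0) ∧
    ∑ o : Option (ZMod p), f o = 0

lemma cond_tau [NeZero p] {α : K} (hα : orderOf α = p) (f : Option (ZMod p) → K) (b : ZMod p)
    (h : cond α f) : cond α (f ∘ ⇑(tau b)) := by
  obtain ⟨h1, h2⟩ := h
  constructor
  · intro ℓ hℓ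
    have hterm : ∀ x : ZMod p, (f ∘ ⇑(tau b)) (some x) * AA α (x * ℓ)
        = (fun u => f (some u) * AA α (u * ℓ) * AA α (-(b * ℓ))) ((Equiv.addRight b) x) := by
      intro x
      simp only [Function.comp_apply, tau_some, Equiv.coe_addRight]
      rw [mul_assoc, ← AA_add hα]
      congr 2
      ring
    rw [Finset.sum_congr rfl fun x _ => hterm x,
      Equiv.sum_comp (Equiv.addRight b) fun u => f (some u) * AA α (u * ℓ) * AA α (-(b * ℓ))]
    rw [← Finset.sum_mul, h1 ℓ hℓ, zero_mul]
  · exact (Equiv.sum_comp (tau b) f).trans h2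

lemma cond_rho [NeZero p] {α : K} (hp : p.Prime) (hodd : p % 2 = 1) (hα : orderOf α = p)
    (f : Option (ZMod p) → K) (h : cond α f) : cond α (f ∘ ⇑(rho hp)) := by
  obtain ⟨h1, h2⟩ := h
  haveI : Fact p.Prime := ⟨hp⟩
  have hNzero : ∑ x : ZMod p, f (some x) * AA α (x * 0) = f none := by
    have he : ∑ x : ZMod p, f (some x) * AA α (x * 0) = ∑ x : ZMod p, f (some x) :=
      Finset.sum_congr rfl fun x _ => by rw [mul_zero, AA_zero, mul_one]
    rw [he]
    rw [Fintype.sum_option] at h2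
    have := eq_neg_of_add_eq_zero_right h2
    rw [this, CharTwo.neg_eq]
  refine ⟨?_, (Equiv.sum_comp (rho hp) f).trans h2⟩
  intro ℓ hℓ
  have hℓ0 : ℓ ≠ 0 := isQR_ne_zero hp hℓ
  rw [Finset.sum_eq_sum_sdiff_singleton_add (Finset.mem_univ (0 : ZMod p))]
  have e0 : (f ∘ ⇑(rho hp)) (some 0) * AA α ((0 : ZMod p) * ℓ) = f none := by
    simp [rhoFun]
  rw [e0]
  -- reindex the main sum by x ↦ -x⁻¹
  have stepA : ∑ x ∈ Finset.univ \ {(0 : ZMod p)}, (f ∘ ⇑(rho hp)) (some x) * AA α (x * ℓ)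
      = ∑ j ∈ Finset.univ \ {(0 : ZMod p)}, f (some j) * AA α (-(j⁻¹ * ℓ)) := by
    refine Finset.sum_nbij' (i := fun x => -x⁻¹) (j := fun x => -x⁻¹) ?_ ?_ ?_ ?_ ?_
    · intro a ha
      simp only [Finset.mem_sdiff, Finset.mem_univ, Finset.mem_singleton, true_and] at ha ⊢
      exact neg_ne_zero.mpr (inv_ne_zero ha)
    · intro a ha
      simp only [Finset.mem_sdiff, Finset.mem_univ, Finset.mem_singleton, true_and] at ha ⊢
      exact neg_ne_zero.mpr (inv_ne_zero ha)
    · intro a _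
      show -(-a⁻¹)⁻¹ = a
      rw [inv_neg, inv_inv, neg_neg]
    · intro a _
      show -(-a⁻¹)⁻¹ = a
      rw [inv_neg, inv_inv, neg_neg]
    · intro a ha
      simp only [Finset.mem_sdiff, Finset.mem_univ, Finset.mem_singleton, true_and] at ha
      simp only [Function.comp_apply, rho_apply]
      rw [show rhoFun (some a) = some (-a⁻¹) from by simp [rhoFun, ha]]
      congr 2
      rw [inv_neg, inv_inv, neg_mul, neg_neg]
  rw [stepA]
  -- Fourier-expand f (some j)
  have hf : ∀ j : ZMod p,
      f (some j) = ∑ y : ZMod p, (∑ x : ZMod p, f (some x) * AA α (x * y)) * AA α (-(j * y)) :=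
    fun j => (fourier hp hodd hα (fun x => f (some x)) j).symm
  have stepB : ∑ j ∈ Finset.univ \ {(0 : ZMod p)}, f (some j) * AA α (-(j⁻¹ * ℓ))
      = ∑ y : ZMod p, (∑ x : ZMod p, f (some x) * AA α (x * y)) *
          ∑ j ∈ Finset.univ \ {(0 : ZMod p)}, AA α (-(j * y) + -(j⁻¹ * ℓ)) := by
    have : ∀ j ∈ Finset.univ \ {(0 : ZMod p)}, f (some j) * AA α (-(j⁻¹ * ℓ))
        = ∑ y : ZMod p, (∑ x : ZMod p, f (some x) * AA α (x * y)) *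
            AA α (-(j * y) + -(j⁻¹ * ℓ)) := by
      intro j _
      rw [hf j, Finset.sum_mul]
      refine Finset.sum_congr rfl fun y _ => ?_
      rw [mul_assoc, ← AA_add hα]
    rw [Finset.sum_congr rfl this, Finset.sum_comm]
    exact Finset.sum_congr rfl fun y _ => (Finset.mul_sum _ _ _).symm
  rw [stepB]
  -- only the y = 0 term survives
  have stepC : ∑ y : ZMod p, (∑ x : ZMod p, f (some x) * AA α (x * y)) *
        ∑ j ∈ Finset.univ \ {(0 : ZMod p)}, AA α (-(j * y) + -(j⁻¹ * ℓ))
      = f none := by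
    rw [Finset.sum_eq_single (0 : ZMod p)]
    · -- the y = 0 term
      rw [hNzero]
      have hG0 : ∑ j ∈ Finset.univ \ {(0 : ZMod p)}, AA α (-(j * 0) + -(j⁻¹ * ℓ)) = 1 := by
        have hre : ∑ j ∈ Finset.univ \ {(0 : ZMod p)}, AA α (-(j * 0) + -(j⁻¹ * ℓ))
            = ∑ k ∈ Finset.univ \ {(0 : ZMod p)}, AA α k := by
          refine Finset.sum_nbij' (i := fun j => -(j⁻¹ * ℓ)) (j := fun k => -(k⁻¹ * ℓ))
            ?_ ?_ ?_ ?_ ?_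
          · intro a ha
            simp only [Finset.mem_sdiff, Finset.mem_univ, Finset.mem_singleton, true_and] at ha ⊢
            exact neg_ne_zero.mpr (mul_ne_zero (inv_ne_zero ha) hℓ0)
          · intro a ha
            simp only [Finset.mem_sdiff, Finset.mem_univ, Finset.mem_singleton, true_and] at ha ⊢
            exact neg_ne_zero.mpr (mul_ne_zero (inv_ne_zero ha) hℓ0)
          · intro a ha
            simp only [Finset.mem_sdiff, Finset.mem_univ, Finset.mem_singleton, true_and] at ha
            show -((-(a⁻¹ * ℓ))⁻¹ * ℓ) = a
            rw [inv_neg, neg_mul, neg_neg, mul_inv_rev, inv_inv]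
            field_simp
          · intro a ha
            simp only [Finset.mem_sdiff, Finset.mem_univ, Finset.mem_singleton, true_and] at ha
            show -((-(a⁻¹ * ℓ))⁻¹ * ℓ) = a
            rw [inv_neg, neg_mul, neg_neg, mul_inv_rev, inv_inv]
            field_simp
          · intro a _
            rw [mul_zero, neg_zero, zero_add]
        rw [hre]
        have hall : ∑ k : ZMod p, AA α k = 0 := by
          have := sum_AA hp hodd hα (1 : ZMod p)
          rw [if_neg one_ne_zero] at this
          simpa [one_mul] using this
        rw [Finset.sum_sdiff_eq_sub (Finset.subset_univ {0}), hall, Finset.sum_singleton,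
          AA_zero, zero_sub, CharTwo.neg_eq]
      rw [hG0, mul_one]
    · -- other terms vanish
      intro y _ hy0
      by_cases hQ : isQR y
      · rw [h1 y hQ, zero_mul]
      · have hGy : ∑ j ∈ Finset.univ \ {(0 : ZMod p)}, AA α (-(j * y) + -(j⁻¹ * ℓ)) = 0 := by
          refine Finset.sum_involution (g := fun a _ => ℓ * (y⁻¹ * a⁻¹)) ?_ ?_ ?_ ?_
          · intro a ha
            simp only [Finset.mem_sdiff, Finset.mem_univ, Finset.mem_singleton, true_and] at ha
            have hexp : -(ℓ * (y⁻¹ * a⁻¹) * y) + -((ℓ * (y⁻¹ * a⁻¹))⁻¹ * ℓ)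
                = -(a * y) + -(a⁻¹ * ℓ) := by
              field_simp
              ring
            rw [hexp]
            exact CharTwo.add_self_eq_zero _
          · intro a ha _
            simp only [Finset.mem_sdiff, Finset.mem_univ, Finset.mem_singleton, true_and] at ha
            intro heq
            apply hQ
            obtain ⟨m, hm0, hm2⟩ := hℓ
            refine ⟨m * a⁻¹, mul_ne_zero hm0 (inv_ne_zero ha), ?_⟩
            have hsq : ℓ = y * a ^ 2 := by
              field_simp at heq
              linear_combination heq
            rw [mul_pow, hm2, hsq]
            field_simp
          · intro a ha
            simp only [Finset.mem_sdiff, Finset.mem_univ, Finset.mem_singleton, true_and] at ha ⊢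
            exact mul_ne_zero hℓ0 (mul_ne_zero (inv_ne_zero hy0) (inv_ne_zero ha))
          · intro a ha
            simp only [Finset.mem_sdiff, Finset.mem_univ, Finset.mem_singleton, true_and] at ha
            field_simp
        rw [hGy, mul_zero]
    · intro hmem
      exact absurd (Finset.mem_univ _) hmem
  rw [stepC]
  exact CharTwo.add_self_eq_zero _

def Good [NeZero p] (α : K) (h : Equiv.Perm (Option (ZMod p))) : Prop :=
  ∀ f : Option (ZMod p) → K, cond α f ↔ cond α (f ∘ ⇑h)

lemma good_tau [NeZero p] {α : K} (hα : orderOf α = p) (b : ZMod p) :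
    Good α (tau b) := by
  intro f
  constructor
  · exact cond_tau hα f b
  · intro hc
    have h2 := cond_tau hα (f ∘ ⇑(tau b)) (-b) hc
    have hfe : ((f ∘ ⇑(tau b)) ∘ ⇑(tau (-b))) = f := by
      funext o
      cases o with
      | none => rfl
      | some x => simp
    rwa [hfe] at h2

lemma good_rho [NeZero p] {α : K} (hp : p.Prime) (hodd : p % 2 = 1) (hα : orderOf α = p) :
    Good α (rho hp) := by
  intro f
  constructor
  · exact cond_rho hp hodd hα f
  · intro hc
    have h2 := cond_rho hp hodd hα (f ∘ ⇑(rho hp)) hc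
    have hfe : ((f ∘ ⇑(rho hp)) ∘ ⇑(rho hp)) = f := by
      funext o
      simp only [Function.comp_apply, rho_apply]
      rw [rhoFun_involutive hp o]
    rwa [hfe] at h2

lemma good_trans [NeZero p] {α : K} {h₁ h₂ : Equiv.Perm (Option (ZMod p))}
    (g1 : Good α h₁) (g2 : Good (K := K) α h₂) : Good α (h₁.trans h₂) := by
  intro f
  have : (f ∘ ⇑(h₁.trans h₂)) = ((f ∘ ⇑h₂) ∘ ⇑h₁) := rfl
  rw [this]
  exact (g2 f).trans (g1 (f ∘ ⇑h₂))

end Cond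

section Mem

variable {p : ℕ} {K : Type*} [Field K] [CharP K 2]

def fK [NeZero p] (K : Type*) [Field K] [CharP K 2] (c : Fin (p + 1) → ZMod 2) :
    Option (ZMod p) → K :=
  fun o => ZMod.castHom (dvd_refl 2) K (c ((em (p := p)).symm o))

lemma mem_iff [NeZero p] {α : K} (hα : orderOf α = p) (c : Fin (p + 1) → ZMod 2) :
    c ∈ extQRCode p K α ↔ cond α (fK K c) := by
  haveI : Fact (Nat.Prime 2) := ⟨Nat.prime_two⟩
  have key : ∀ ℓ : ZMod p,
      ∑ i : Fin p, (ZMod.castHom (dvd_refl 2) K (c i.castSucc)) * α ^ ((i : ℕ) * ℓ.val)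
        = ∑ x : ZMod p, fK K c (some x) * AA α (x * ℓ) := by
    intro ℓ
    refine Finset.sum_nbij' (i := fun i : Fin p => ((i : ℕ) : ZMod p))
      (j := fun x : ZMod p => (⟨x.val, ZMod.val_lt x⟩ : Fin p)) ?_ ?_ ?_ ?_ ?_
    · intro a _; exact Finset.mem_univ _
    · intro a _; exact Finset.mem_univ _
    · intro a _
      ext
      simp [ZMod.val_natCast, Nat.mod_eq_of_lt a.isLt]
    · intro a _
      simp [ZMod.natCast_rightInverse a]
    · intro a _
      have h1 : (em (p := p)).symm (some ((a : ℕ) : ZMod p)) = a.castSucc := by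
        rw [em_symm_some]
        ext
        simp [ZMod.val_natCast, Nat.mod_eq_of_lt a.isLt]
      have h2 : AA α (((a : ℕ) : ZMod p) * ℓ) = α ^ ((a : ℕ) * ℓ.val) := by
        have : ((a : ℕ) : ZMod p) * ℓ = (((a : ℕ) * ℓ.val : ℕ) : ZMod p) := by
          push_cast [ZMod.natCast_val, ZMod.cast_id]
          ring
        rw [this, AA_natCast hα]
      rw [fK, h1, h2]
  have hpar : ∑ o : Option (ZMod p), fK K c o
      = ZMod.castHom (dvd_refl 2) K (∑ i : Fin (p + 1), c i) := by
    rw [map_sum]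
    exact Equiv.sum_comp (em (p := p)).symm fun i => ZMod.castHom (dvd_refl 2) K (c i)
  constructor
  · rintro ⟨hA, hB⟩
    constructor
    · intro ℓ hℓ
      rw [← key ℓ]
      exact hA ℓ hℓ
    · rw [hpar, hB, map_zero]
  · rintro ⟨hA, hB⟩
    constructor
    · intro ℓ hℓ
      rw [key ℓ]
      exact hA ℓ hℓ
    · have hinj : Function.Injective (ZMod.castHom (dvd_refl 2) K) :=
        (ZMod.castHom (dvd_refl 2) K).injective
      apply hinj
      rw [map_zero, ← hpar]
      exact hB

def tw [NeZero p] (h : Equiv.Perm (Option (ZMod p))) : Equiv.Perm (Fin (p + 1)) :=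
  ((em (p := p)).trans h).trans (em (p := p)).symm

lemma tw_apply [NeZero p] (h : Equiv.Perm (Option (ZMod p))) (i : Fin (p + 1)) :
    tw h i = (em (p := p)).symm (h (em i)) := rfl

lemma mem_tw [NeZero p] {α : K} (hα : orderOf α = p) {h : Equiv.Perm (Option (ZMod p))}
    (hg : Good (K := K) α h) :
    ∀ c, c ∈ extQRCode p K α ↔ c ∘ ⇑(tw h) ∈ extQRCode p K α := by
  intro c
  rw [mem_iff hα c, mem_iff hα (c ∘ ⇑(tw h))]
  have hfe : fK K (c ∘ ⇑(tw h)) = ((fK K c) ∘ ⇑h : Option (ZMod p) → K) := by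
    funext o
    simp [fK, tw_apply]
  rw [hfe]
  exact hg (fK K c)

end Mem

section Design

variable {n : ℕ}

lemma suppF_comp (c : Fin n → ZMod 2) (g : Equiv.Perm (Fin n)) :
    suppF (c ∘ ⇑g) = (suppF c).image ⇑g⁻¹ := by
  ext i
  simp only [suppF, Finset.mem_image, Finset.mem_filter, Finset.mem_univ, true_and,
    Function.comp_apply]
  constructor
  · intro h
    exact ⟨g i, h, by simp⟩
  · rintro ⟨a, ha, rfl⟩
    simpa using ha

lemma wt_comp (c : Fin n → ZMod 2) (g : Equiv.Perm (Fin n)) : wt (c ∘ ⇑g) = wt c := by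
  have h1 : wt (c ∘ ⇑g) = (suppF (c ∘ ⇑g)).card := rfl
  have h2 : wt c = (suppF c).card := rfl
  rw [h1, h2, suppF_comp, Finset.card_image_of_injective _ (Equiv.injective _)]

lemma pres_inv (C : Set (Fin n → ZMod 2)) (g : Equiv.Perm (Fin n))
    (hg : ∀ c, c ∈ C ↔ c ∘ ⇑g ∈ C) : ∀ c, c ∈ C ↔ c ∘ ⇑g⁻¹ ∈ C := by
  intro c
  have h := hg (c ∘ ⇑g⁻¹)
  have hcc : ((c ∘ ⇑g⁻¹) ∘ ⇑g) = c := by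
    funext i
    simp
  rw [hcc] at h
  exact h.symm

lemma mem_shellBlocks {C : Set (Fin n → ZMod 2)} {ℓ : ℕ} {b : Finset (Fin n)} :
    b ∈ shellBlocks C ℓ ↔ ∃ c, (c ∈ C ∧ wt c = ℓ) ∧ suppF c = b := by
  simp only [shellBlocks, Finset.mem_image, Set.Finite.mem_toFinset]
  constructor
  · rintro ⟨c, hc, rfl⟩
    exact ⟨c, hc, rfl⟩
  · rintro ⟨c, hc, rfl⟩
    exact ⟨c, hc, rfl⟩

lemma count_comp (C : Set (Fin n → ZMod 2)) (ℓ : ℕ) (g : Equiv.Perm (Fin n))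
    (hg : ∀ c, c ∈ C ↔ c ∘ ⇑g ∈ C) (S : Finset (Fin n)) :
    ((shellBlocks C ℓ).filter fun b => S ⊆ b).card
      = ((shellBlocks C ℓ).filter fun b => S.image ⇑g⁻¹ ⊆ b).card := by
  refine Finset.card_bij (fun b _ => b.image ⇑g⁻¹) ?_ ?_ ?_
  · rintro b hb
    rw [Finset.mem_filter] at hb ⊢
    obtain ⟨hbB, hSb⟩ := hb
    refine ⟨?_, Finset.image_subset_image hSb⟩
    rw [mem_shellBlocks] at hbB ⊢
    obtain ⟨c, hc, rfl⟩ := hbB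
    exact ⟨c ∘ ⇑g, ⟨(hg c).1 hc.1, by rw [wt_comp]; exact hc.2⟩, suppF_comp c g⟩
  · intro b1 h1 b2 h2 h
    exact Finset.image_injective (Equiv.injective _) h
  · intro b hb
    rw [Finset.mem_filter] at hb
    obtain ⟨hbB, hSb⟩ := hb
    have him : (b.image ⇑g).image ⇑g⁻¹ = b := by
      rw [Finset.image_image]
      have : (⇑g⁻¹ ∘ ⇑g) = id := by
        funext i
        simp
      rw [this, Finset.image_id]
    refine ⟨b.image ⇑g, ?_, him⟩
    rw [Finset.mem_filter]
    constructor
    · rw [mem_shellBlocks] at hbB ⊢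
      obtain ⟨c, hc, rfl⟩ := hbB
      refine ⟨c ∘ ⇑g⁻¹, ⟨(pres_inv C g hg c).1 hc.1, by rw [wt_comp]; exact hc.2⟩, ?_⟩
      rw [suppF_comp c g⁻¹, inv_inv]
    · intro s hs
      have : (⇑g⁻¹) s ∈ b := hSb (Finset.mem_image_of_mem _ hs)
      have h2 : g ((⇑g⁻¹) s) ∈ b.image ⇑g := Finset.mem_image_of_mem _ this
      simpa using h2

lemma design_aux (C : Set (Fin n → ZMod 2)) (ℓ : ℕ) (S₀ : Finset (Fin n))
    (hGood : ∀ S : Finset (Fin n), S.card = 2 →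
      ∃ g : Equiv.Perm (Fin n), (∀ c, c ∈ C ↔ c ∘ ⇑g ∈ C) ∧ S₀.image ⇑g = S) :
    ∃ lam, IsDesign n 2 ℓ lam (shellBlocks C ℓ) := by
  refine ⟨((shellBlocks C ℓ).filter fun b => S₀ ⊆ b).card, ?_, ?_⟩
  · intro b hb
    rw [mem_shellBlocks] at hb
    obtain ⟨c, hc, rfl⟩ := hb
    exact hc.2
  · intro S hS
    obtain ⟨g, hg, hgS⟩ := hGood S hS
    have himg : S.image ⇑g⁻¹ = S₀ := by
      rw [← hgS, Finset.image_image]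
      have : (⇑g⁻¹ ∘ ⇑g) = id := by
        funext i
        simp
      rw [this, Finset.image_id]
    rw [count_comp C ℓ g hg S, himg]

lemma dual_pres (C : Set (Fin n → ZMod 2)) (g : Equiv.Perm (Fin n))
    (hg : ∀ c, c ∈ C ↔ c ∘ ⇑g ∈ C) :
    ∀ y, y ∈ dualCode C ↔ y ∘ ⇑g ∈ dualCode C := by
  have hg' := pres_inv C g hg
  intro y
  constructor
  · intro hy x hx
    have hx' : x ∘ ⇑g⁻¹ ∈ C := (hg' x).1 hx
    calc ∑ i, x i * (y ∘ ⇑g) i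
        = ∑ i, (fun j => x ((⇑g⁻¹) j) * y j) (g i) := Finset.sum_congr rfl fun i _ => by simp
      _ = ∑ j, x ((⇑g⁻¹) j) * y j := Equiv.sum_comp g (fun j => x ((⇑g⁻¹) j) * y j)
      _ = 0 := hy _ hx'
  · intro hy x hx
    have hx' : x ∘ ⇑g ∈ C := (hg x).1 hx
    calc ∑ i, x i * y i
        = ∑ i, (x ∘ ⇑g) i * (y ∘ ⇑g) i := (Equiv.sum_comp g fun j => x j * y j).symm
      _ = 0 := hy _ hx'

end Design

section Final

variable {p : ℕ} {K : Type*} [Field K] [CharP K 2]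

lemma exists_good [NeZero p] {α : K} (hp : p.Prime) (hodd : p % 2 = 1)
    (hα : orderOf α = p) (S : Finset (Fin (p + 1))) (hS : S.card = 2) :
    ∃ g : Equiv.Perm (Fin (p + 1)),
      (∀ c, c ∈ extQRCode p K α ↔ c ∘ ⇑g ∈ extQRCode p K α) ∧
      ({(em (p := p)).symm none, (em (p := p)).symm (some 0)} :
        Finset (Fin (p + 1))).image ⇑g = S := by
  haveI : Fact p.Prime := ⟨hp⟩
  obtain ⟨u, v, huv, rfl⟩ := Finset.card_eq_two.mp hS
  have main : ∀ (ou ov : Option (ZMod p)), ou ≠ ov →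
      ∃ h : Equiv.Perm (Option (ZMod p)), Good (K := K) α h ∧
        ((h none = ou ∧ h (some 0) = ov) ∨ (h none = ov ∧ h (some 0) = ou)) := by
    intro ou ov hne
    match ou, ov with
    | none, none => exact absurd rfl hne
    | none, some y =>
      exact ⟨tau y, good_tau hα y, Or.inl ⟨rfl, by simp⟩⟩
    | some y, none =>
      exact ⟨tau y, good_tau hα y, Or.inr ⟨rfl, by simp⟩⟩
    | some x, some y =>
      have hxy : x ≠ y := by simpa using hne
      have hc0 : (x - y)⁻¹ ≠ 0 := inv_ne_zero (sub_ne_zero.mpr hxy)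
      refine ⟨(tau (-(x - y)⁻¹)).trans ((rho hp).trans (tau y)),
        good_trans (good_tau hα _) (good_trans (good_rho hp hodd hα) (good_tau hα _)),
        Or.inr ⟨?_, ?_⟩⟩
      · simp [Equiv.trans_apply, rhoFun]
      · simp only [Equiv.trans_apply, tau_some, rho_apply]
        rw [zero_add]
        rw [show rhoFun (some (-(x - y)⁻¹)) = some (-(-(x - y)⁻¹)⁻¹) from by
          simp [rhoFun, neg_ne_zero.mpr hc0]]
        rw [inv_neg, inv_inv, neg_neg, tau_some, sub_add_cancel]
  obtain ⟨h, hGoodh, hcase⟩ := main (em u) (em v) ((Equiv.injective _).ne huv)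
  refine ⟨tw h, mem_tw hα hGoodh, ?_⟩
  rw [Finset.image_insert, Finset.image_singleton]
  have t1 : tw h ((em (p := p)).symm none) = (em (p := p)).symm (h none) := by
    rw [tw_apply, Equiv.apply_symm_apply]
  have t2 : tw h ((em (p := p)).symm (some 0)) = (em (p := p)).symm (h (some 0)) := by
    rw [tw_apply, Equiv.apply_symm_apply]
  rcases hcase with ⟨e1, e2⟩ | ⟨e1, e2⟩
  · rw [t1, t2, e1, e2, Equiv.symm_apply_apply, Equiv.symm_apply_apply]
  · rw [t1, t2, e1, e2, Equiv.symm_apply_apply, Equiv.symm_apply_apply]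
    exact Finset.pair_comm v u

end Final

end QRAux14

/-- For a prime `p ≡ 1 (mod 8)`, every non-empty shell of the extended
binary quadratic residue code `Q̃_{p+1}` is a combinatorial `2`-design, and the same holds
for every non-empty shell of its dual code. -/
theorem extQR_shells_two_design (p : ℕ) (hp : p.Prime) (h8 : p % 8 = 1)
    (K : Type*) [Field K] [CharP K 2] (α : K) (hα : orderOf α = p) :
    (∀ ℓ : ℕ, (shell (extQRCode p K α) ℓ).Nonempty →
      ∃ lam : ℕ, IsDesign (p + 1) 2 ℓ lam (shellBlocks (extQRCode p K α) ℓ)) ∧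
    (∀ ℓ : ℕ, (shell (dualCode (extQRCode p K α)) ℓ).Nonempty →
      ∃ lam : ℕ, IsDesign (p + 1) 2 ℓ lam (shellBlocks (dualCode (extQRCode p K α)) ℓ)) := by
  haveI : NeZero p := ⟨hp.ne_zero⟩
  have hodd : p % 2 = 1 := by omega
  have hGoodAll : ∀ S : Finset (Fin (p + 1)), S.card = 2 →
      ∃ g : Equiv.Perm (Fin (p + 1)),
        (∀ c, c ∈ extQRCode p K α ↔ c ∘ ⇑g ∈ extQRCode p K α) ∧
        ({(QRAux14.em (p := p)).symm none, (QRAux14.em (p := p)).symm (some 0)} :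
          Finset (Fin (p + 1))).image ⇑g = S :=
    fun S hS => QRAux14.exists_good hp hodd hα S hS
  constructor
  · intro ℓ _
    exact QRAux14.design_aux _ ℓ
      ({(QRAux14.em (p := p)).symm none, (QRAux14.em (p := p)).symm (some 0)} :
        Finset (Fin (p + 1))) hGoodAll
  · intro ℓ _
    refine QRAux14.design_aux _ ℓ
      ({(QRAux14.em (p := p)).symm none, (QRAux14.em (p := p)).symm (some 0)} :
        Finset (Fin (p + 1))) (fun S hS => ?_)
    obtain ⟨g, hg, hgS⟩ := hGoodAll S hS
    exact ⟨g, QRAux14.dual_pres _ g hg, hgS⟩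
end

section
/- Let p be a prime with p ≡ 1 (mod 8) and let Q̃_{p+1} be the extended binary quadratic residue code of length p+1. Then Q̃_{p+1} ∩ Q̃_{p+1}^⊥ = {0, 1}, where 0 is the zero vector and 1 is the all-ones vector of length p+1. -/
set_option linter.unusedVariables false

section Basics

set_option linter.unusedSectionVars false
variable {p : ℕ} [Fact p.Prime] {K : Type*} [Field K] {α : K}

theorem apow_p (hα : orderOf α = p) : α ^ p = 1 := hα ▸ pow_orderOf_eq_one α

theorem apow_mod (hα : orderOf α = p) (a : ℕ) : α ^ a = α ^ (a % p) := by
  conv_lhs => rw [← Nat.div_add_mod a p]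
  rw [pow_add, pow_mul, apow_p hα, one_pow, one_mul]

theorem az_add (hα : orderOf α = p) (a b : ZMod p) :
    α ^ ((a + b).val) = α ^ a.val * α ^ b.val := by
  rw [← pow_add, ZMod.val_add, ← apow_mod hα]

theorem az_mul (hα : orderOf α = p) (a b : ZMod p) :
    α ^ ((a * b).val) = α ^ (a.val * b.val) := by
  rw [ZMod.val_mul, ← apow_mod hα]

theorem az_geom (hα : orderOf α = p) (hp1 : 1 < p) : ∑ m : ZMod p, α ^ m.val = 0 := by
  have hα1 : α ≠ 1 := by
    intro h
    rw [h, orderOf_one] at hα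
    omega
  have h1 : ∑ m : ZMod p, α ^ m.val = ∑ i ∈ Finset.range p, α ^ i := by
    apply Finset.sum_nbij' (i := fun m : ZMod p => m.val) (j := fun i : ℕ => (i : ZMod p))
    · intro a _; exact Finset.mem_range.mpr (ZMod.val_lt a)
    · intro a _; exact Finset.mem_univ _
    · intro a _; exact ZMod.natCast_rightInverse a
    · intro a ha; exact ZMod.val_cast_of_lt (Finset.mem_range.mp ha)
    · intro a _; rfl
  rw [h1, geom_sum_eq hα1, apow_p hα, sub_self, zero_div]

theorem az_dft (hα : orderOf α = p) (hp1 : 1 < p) (s : ZMod p) :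
    ∑ m : ZMod p, α ^ ((m * s).val) = if s = 0 then (p : K) else 0 := by
  by_cases hs : s = 0
  · simp [hs, ZMod.val_zero, Finset.card_univ, ZMod.card]
  · rw [if_neg hs, ← az_geom hα hp1]
    exact Fintype.sum_equiv (Equiv.mulRight₀ s hs) _ _ (fun m => rfl)

end Basics

section Chi

variable {p : ℕ} [Fact p.Prime] {K : Type*} [Field K] {α : K}

theorem sq_cond_iff (ℓ : ZMod p) :
    (∃ m : ZMod p, m ≠ 0 ∧ m ^ 2 = ℓ) ↔ quadraticChar (ZMod p) ℓ = 1 := by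
  constructor
  · rintro ⟨m, hm0, rfl⟩
    exact quadraticChar_sq_one' hm0
  · intro h
    have hℓ : ℓ ≠ 0 := by
      intro h0
      rw [h0, quadraticChar_zero] at h
      omega
    obtain ⟨m, rfl⟩ := (quadraticChar_one_iff_isSquare hℓ).mp h
    exact ⟨m, fun h0 => hℓ (by rw [h0, mul_zero]), sq m⟩

theorem chi_two (hp8 : p % 8 = 1) : quadraticChar (ZMod p) 2 = 1 := by
  have hp2 : p ≠ 2 := by have := (Fact.out : p.Prime).two_le; omega
  have h2 : (2 : ZMod p) ≠ 0 := by
    have : ((2 : ℕ) : ZMod p) ≠ 0 := by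
      rw [Ne, ZMod.natCast_eq_zero_iff]
      intro h
      exact hp2 ((Nat.prime_dvd_prime_iff_eq Fact.out Nat.prime_two).mp h)
    simpa using this
  exact (quadraticChar_one_iff_isSquare h2).mpr
    ((ZMod.exists_sq_eq_two_iff hp2).mpr (Or.inl hp8))

theorem chi_neg_one (hp8 : p % 8 = 1) : quadraticChar (ZMod p) (-1) = 1 := by
  have h4 : p % 4 = 1 := by omega
  have h1 : (-1 : ZMod p) ≠ 0 := by
    simpa using (neg_ne_zero.mpr (one_ne_zero (α := ZMod p)))
  exact (quadraticChar_one_iff_isSquare h1).mpr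
    (ZMod.exists_sq_eq_neg_one_iff.mpr (by omega))

/-- reindexing a character-class sum under multiplication by a nonzero element -/
theorem chi_sum_mul (t : ZMod p) (ht : t ≠ 0) (ε : ℤ) :
    ∑ ℓ ∈ Finset.univ.filter (fun ℓ : ZMod p => quadraticChar (ZMod p) ℓ = ε),
        α ^ ((ℓ * t).val)
      = ∑ ℓ ∈ Finset.univ.filter
          (fun ℓ : ZMod p => quadraticChar (ZMod p) ℓ = ε * quadraticChar (ZMod p) t),
          α ^ ℓ.val := by
  have htchi : quadraticChar (ZMod p) t ≠ 0 := by
    rw [Ne, quadraticChar_eq_zero_iff]; exact ht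
  have htsq : quadraticChar (ZMod p) t * quadraticChar (ZMod p) t = 1 := by
    have := quadraticChar_sq_one (F := ZMod p) ht
    rwa [pow_two] at this
  have hinv : quadraticChar (ZMod p) t⁻¹ = quadraticChar (ZMod p) t := by
    have h1 : quadraticChar (ZMod p) t * quadraticChar (ZMod p) t⁻¹ = 1 := by
      rw [← map_mul, mul_inv_cancel₀ ht, map_one]
    have := htsq.trans h1.symm
    exact (mul_left_cancel₀ htchi this).symm
  apply Finset.sum_nbij' (i := fun ℓ => ℓ * t) (j := fun r => r * t⁻¹)
  · intro a ha
    simp only [Finset.mem_filter, Finset.mem_univ, true_and] at ha ⊢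
    rw [map_mul, ha]
  · intro a ha
    simp only [Finset.mem_filter, Finset.mem_univ, true_and] at ha ⊢
    rw [map_mul, ha, hinv, mul_assoc, htsq, mul_one]
  · intro a _; exact mul_inv_cancel_right₀ ht a
  · intro a _; exact inv_mul_cancel_right₀ ht a
  · intro a _; rfl

end Chi

section Eta

variable {p : ℕ} [Fact p.Prime] {K : Type*} [Field K] [CharP K 2] {α : K}

theorem eta_cases (hα : orderOf α = p) (hp8 : p % 8 = 1) :
    ∃ ε : ℤ,
      (∑ ℓ ∈ Finset.univ.filter (fun ℓ : ZMod p => quadraticChar (ZMod p) ℓ = ε),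
          α ^ ℓ.val) = 0 ∧
      (∑ ℓ ∈ Finset.univ.filter (fun ℓ : ZMod p => quadraticChar (ZMod p) ℓ = -ε),
          α ^ ℓ.val) = 1 := by
  have hp1 : 1 < p := (Fact.out : p.Prime).one_lt
  have hp2 : 2 < p := by have := (Fact.out : p.Prime).two_le; omega
  set η : K := ∑ ℓ ∈ Finset.univ.filter (fun ℓ : ZMod p => quadraticChar (ZMod p) ℓ = 1),
    α ^ ℓ.val with hη
  set η' : K := ∑ ℓ ∈ Finset.univ.filter (fun ℓ : ZMod p => quadraticChar (ZMod p) ℓ = -1),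
    α ^ ℓ.val with hη'
  have hsum : η + η' = 1 := by
    have hdisj : Disjoint
        (Finset.univ.filter (fun ℓ : ZMod p => quadraticChar (ZMod p) ℓ = 1))
        (Finset.univ.filter (fun ℓ : ZMod p => quadraticChar (ZMod p) ℓ = -1)) := by
      rw [Finset.disjoint_filter]
      intro x _ h1 h2
      omega
    have hunion : (Finset.univ.filter (fun ℓ : ZMod p => quadraticChar (ZMod p) ℓ = 1)) ∪
        (Finset.univ.filter (fun ℓ : ZMod p => quadraticChar (ZMod p) ℓ = -1))
        = Finset.univ.erase (0 : ZMod p) := by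
      rw [← Finset.filter_or, ← Finset.filter_ne']
      apply Finset.filter_congr
      intro x _
      constructor
      · rintro (h | h) h0 <;> rw [h0, quadraticChar_zero] at h <;> omega
      · intro h; exact quadraticChar_dichotomy h
    have := Finset.sum_union hdisj (f := fun ℓ : ZMod p => α ^ ℓ.val)
    rw [hunion] at this
    rw [← hη, ← hη'] at this
    have h2 : (∑ ℓ ∈ Finset.univ.erase (0 : ZMod p), α ^ ℓ.val) + α ^ (0 : ZMod p).val
        = ∑ ℓ : ZMod p, α ^ ℓ.val :=
      Finset.sum_erase_add _ _ (Finset.mem_univ _)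
    rw [az_geom hα hp1, ZMod.val_zero, pow_zero] at h2
    beta_reduce at this
    rw [← this]
    have hm : (-1 : K) = 1 := CharTwo.neg_eq 1
    linear_combination h2 + hm
  have h2v : (2 : ZMod p).val = 2 := by
    have : ((2 : ℕ) : ZMod p).val = 2 % p := ZMod.val_natCast p 2
    rw [Nat.mod_eq_of_lt hp2] at this
    simpa using this
  have h2ne : (2 : ZMod p) ≠ 0 := by
    intro h
    have := congrArg ZMod.val h
    rw [h2v, ZMod.val_zero] at this
    omega
  have hsq : η ^ 2 = η := by
    rw [hη, sum_pow_char]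
    have step : ∀ ℓ : ZMod p, (α ^ ℓ.val) ^ 2 = α ^ ((ℓ * 2).val) := by
      intro ℓ
      rw [az_mul hα, h2v, ← pow_mul]
    rw [Finset.sum_congr rfl (fun ℓ _ => step ℓ)]
    rw [chi_sum_mul 2 h2ne 1, chi_two hp8]
    norm_num
  have hcase : η = 0 ∨ η = 1 := by
    have h0 : η * (η - 1) = 0 := by
      rw [mul_sub, mul_one, ← pow_two, hsq, sub_self]
    rcases mul_eq_zero.mp h0 with h | h
    · exact Or.inl h
    · exact Or.inr (by linear_combination h)
  rcases hcase with h | h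
  · refine ⟨1, h, ?_⟩
    have : η' = 1 := by rw [← hsum, h, zero_add]
    exact this
  · refine ⟨-1, ?_, ?_⟩
    · have : η' = 0 := by
        have : η' = 1 - η := by linear_combination hsum
        rw [this, h, sub_self]
      exact this
    · simpa only [neg_neg] using h

theorem FE_val (hα : orderOf α = p) (ε : ℤ)
    (h0 : (∑ ℓ ∈ Finset.univ.filter (fun ℓ : ZMod p => quadraticChar (ZMod p) ℓ = ε),
          α ^ ℓ.val) = 0)
    (h1 : (∑ ℓ ∈ Finset.univ.filter (fun ℓ : ZMod p => quadraticChar (ZMod p) ℓ = -ε),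
          α ^ ℓ.val) = 1)
    (t : ZMod p) (ht : t ≠ 0) :
    ∑ ℓ ∈ Finset.univ.filter (fun ℓ : ZMod p => quadraticChar (ZMod p) ℓ = ε),
        α ^ ((ℓ * t).val)
      = if quadraticChar (ZMod p) t = 1 then 0 else 1 := by
  rw [chi_sum_mul t ht ε]
  rcases quadraticChar_dichotomy (a := t) ht with h | h
  · rw [h, if_pos rfl, mul_one]
    exact h0
  · rw [h, if_neg (by omega), mul_neg_one]
    exact h1

end Eta

/-- the canonical equivalence between `Fin p` and `ZMod p`. -/
def zmodFinEquiv (p : ℕ) [NeZero p] : Fin p ≃ ZMod p where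
  toFun i := ((i : ℕ) : ZMod p)
  invFun m := ⟨m.val, m.val_lt⟩
  left_inv i := Fin.ext (ZMod.val_cast_of_lt i.isLt)
  right_inv m := ZMod.natCast_rightInverse m

theorem zmodFinEquiv_val (p : ℕ) [NeZero p] (i : Fin p) :
    (zmodFinEquiv p i).val = (i : ℕ) := ZMod.val_cast_of_lt i.isLt




set_option maxHeartbeats 1000000 in
/-- For a prime `p ≡ 1 (mod 8)`,
`Q̃_{p+1} ∩ Q̃_{p+1}^⊥ = {0, 1}` (the zero vector and the all-ones vector). -/
theorem extQR_inter_dual (p : ℕ) (hp : p.Prime) (h8 : p % 8 = 1)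
    (K : Type*) [Field K] [CharP K 2] (α : K) (hα : orderOf α = p) :
    extQRCode p K α ∩ dualCode (extQRCode p K α)
      = ({0, 1} : Set (Fin (p + 1) → ZMod 2)) := by
  haveI : Fact p.Prime := ⟨hp⟩
  have hp1 : 1 < p := hp.one_lt
  have hpodd : p % 2 = 1 := by
    rcases hp.eq_two_or_odd with h | h
    · omega
    · exact h
  set e := zmodFinEquiv p with he
  set χc : ZMod 2 →+* K := ZMod.castHom (dvd_refl 2) K with hχc
  have hpK : (p : K) = 1 := by
    have hp' : ((2 * (p / 2) + 1 : ℕ) : K) = (p : K) := by congr 1; omega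
    have h2K : (2 : K) = 0 := CharP.cast_eq_zero K 2
    push_cast at hp'
    rw [h2K] at hp'
    rw [← hp']; ring
  have hpZ2 : ((p : ℕ) : ZMod 2) = 1 := by
    have hp' : ((2 * (p / 2) + 1 : ℕ) : ZMod 2) = (p : ZMod 2) := by congr 1; omega
    have h2K : (2 : ZMod 2) = 0 := by decide
    push_cast at hp'
    rw [h2K] at hp'
    rw [← hp']; ring
  have hgeo : ∀ s : ZMod p, s ≠ 0 → ∑ i : Fin p, α ^ ((i : ℕ) * s.val) = 0 := by
    intro s hs
    have hterm : ∀ i : Fin p, α ^ ((i : ℕ) * s.val) = α ^ ((e i * s).val) := by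
      intro i
      rw [az_mul hα, zmodFinEquiv_val]
    rw [Finset.sum_congr rfl fun i _ => hterm i,
      Equiv.sum_comp e (fun m : ZMod p => α ^ ((m * s).val)), az_dft hα hp1 s, if_neg hs]
  apply Set.ext
  intro c
  simp only [Set.mem_inter_iff, Set.mem_insert_iff, Set.mem_singleton_iff]
  constructor
  · -- hard direction
    rintro ⟨⟨hcQ, hcS⟩, hcD⟩
    obtain ⟨ε, hε0, hε1⟩ := eta_cases hα h8
    set cl := c (Fin.last p) with hcl
    set d : Fin p → ZMod 2 := fun i => c i.castSucc + cl with hd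
    set E : ZMod p → ZMod 2 :=
      fun m => if quadraticChar (ZMod p) m = ε then 1 else 0 with hE
    have hFE : ∀ t : ZMod p, t ≠ 0 →
        ∑ k : ZMod p, (χc (E k) : K) * α ^ ((k * t).val)
          = if quadraticChar (ZMod p) t = 1 then 0 else 1 := by
      intro t ht
      have hterm : ∀ k : ZMod p, (χc (E k) : K) * α ^ ((k * t).val)
          = if quadraticChar (ZMod p) k = ε then α ^ ((k * t).val) else 0 := by
        intro k
        simp only [hE]
        split_ifs with h
        · rw [map_one, one_mul]
        · rw [map_zero, zero_mul]
      rw [Finset.sum_congr rfl fun k _ => hterm k, ← Finset.sum_filter]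
      exact FE_val hα ε hε0 hε1 t ht
    -- orthogonality with shifted idempotent codewords
    have hOrth : ∀ j : ZMod p, ∑ i : Fin p, E (e i - j) * d i = 0 := by
      intro j
      set x : Fin p → ZMod 2 := fun i => E (e i - j) with hx
      have hxQ : x ∈ QRCode p K α := by
        intro ℓ hℓ
        have hχℓ : quadraticChar (ZMod p) ℓ = 1 := (sq_cond_iff ℓ).mp hℓ
        have hℓ0 : ℓ ≠ 0 := by
          intro h
          rw [h, quadraticChar_zero] at hχℓ
          norm_num at hχℓ
        have step1 : ∀ i : Fin p, (χc (x i) : K) * α ^ ((i : ℕ) * ℓ.val)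
            = χc (E (e i - j)) * α ^ ((e i * ℓ).val) := by
          intro i
          rw [az_mul hα, zmodFinEquiv_val]
        have step2 : ∀ k : ZMod p, (χc (E k) : K) * α ^ (((k + j) * ℓ).val)
            = α ^ ((j * ℓ).val) * (χc (E k) * α ^ ((k * ℓ).val)) := by
          intro k
          have hkj : ((k + j) * ℓ) = k * ℓ + j * ℓ := by ring
          rw [hkj, az_add hα]
          ring
        calc ∑ i : Fin p, (χc (x i) : K) * α ^ ((i : ℕ) * ℓ.val)
            = ∑ i : Fin p, (χc (E (e i - j)) : K) * α ^ ((e i * ℓ).val) :=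
              Finset.sum_congr rfl fun i _ => step1 i
          _ = ∑ m : ZMod p, (χc (E (m - j)) : K) * α ^ ((m * ℓ).val) :=
              Equiv.sum_comp e (fun m : ZMod p => (χc (E (m - j)) : K) * α ^ ((m * ℓ).val))
          _ = ∑ k : ZMod p, (χc (E k) : K) * α ^ (((k + j) * ℓ).val) := by
              rw [← Equiv.sum_comp (Equiv.addRight j)
                (fun m : ZMod p => (χc (E (m - j)) : K) * α ^ ((m * ℓ).val))]
              apply Finset.sum_congr rfl
              intro k _
              simp only [Equiv.coe_addRight, add_sub_cancel_right]
          _ = α ^ ((j * ℓ).val) * ∑ k : ZMod p, (χc (E k) : K) * α ^ ((k * ℓ).val) := by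
              rw [Finset.mul_sum]
              exact Finset.sum_congr rfl fun k _ => step2 k
          _ = 0 := by rw [hFE ℓ hℓ0, if_pos hχℓ, mul_zero]
      set sx := ∑ i : Fin p, x i with hsx
      set w : Fin (p + 1) → ZMod 2 := Fin.snoc x sx with hw
      have hwExt : w ∈ extQRCode p K α := by
        constructor
        · have hwcast : (fun i : Fin p => w i.castSucc) = x := by
            funext i
            simp [hw, Fin.snoc_castSucc]
          rw [hwcast]; exact hxQ
        · rw [Fin.sum_univ_castSucc]
          have h1 : ∀ i : Fin p, w i.castSucc = x i := fun i => by
            simp [hw, Fin.snoc_castSucc]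
          have h2 : w (Fin.last p) = sx := by simp [hw, Fin.snoc_last]
          rw [Finset.sum_congr rfl fun i _ => h1 i, h2, ← hsx, CharTwo.add_self_eq_zero]
      have h0 := hcD w hwExt
      rw [Fin.sum_univ_castSucc] at h0
      have h1 : ∀ i : Fin p, w i.castSucc * c i.castSucc = x i * c i.castSucc := fun i => by
        simp [hw, Fin.snoc_castSucc]
      have h2 : w (Fin.last p) * c (Fin.last p) = sx * cl := by simp [hw, Fin.snoc_last, hcl]
      rw [Finset.sum_congr rfl fun i _ => h1 i, h2] at h0
      calc ∑ i : Fin p, x i * d i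
          = ∑ i : Fin p, (x i * c i.castSucc + x i * cl) := by
            apply Finset.sum_congr rfl
            intro i _
            show x i * (c i.castSucc + cl) = _
            ring
        _ = (∑ i : Fin p, x i * c i.castSucc) + sx * cl := by
            rw [Finset.sum_add_distrib, ← Finset.sum_mul, ← hsx]
        _ = 0 := h0
    have hOrthK : ∀ j : ZMod p,
        ∑ i : Fin p, (χc (E (e i - j)) : K) * χc (d i) = 0 := by
      intro j
      have h := congrArg χc (hOrth j)
      rw [map_sum, map_zero] at h
      simpa only [map_mul] using h
    -- the DFT of d vanishes everywhere
    have hD0 : ∀ m : ZMod p, ∑ i : Fin p, (χc (d i) : K) * α ^ ((e i * m).val) = 0 := by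
      intro m
      by_cases hm : m = 0
      · subst hm
        have hsd : ∑ i : Fin p, d i = 0 := by
          have hS := hcS
          rw [Fin.sum_univ_castSucc] at hS
          calc ∑ i : Fin p, d i = ∑ i : Fin p, (c i.castSucc + cl) := rfl
            _ = (∑ i : Fin p, c i.castSucc) + (p : ZMod 2) * cl := by
                rw [Finset.sum_add_distrib, Finset.sum_const, Finset.card_univ,
                  Fintype.card_fin, nsmul_eq_mul]
            _ = (∑ i : Fin p, c i.castSucc) + cl := by rw [hpZ2, one_mul]
            _ = 0 := hS
        calc ∑ i : Fin p, (χc (d i) : K) * α ^ ((e i * 0).val)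
            = ∑ i : Fin p, (χc (d i) : K) := by
              apply Finset.sum_congr rfl
              intro i _
              rw [mul_zero, ZMod.val_zero, pow_zero, mul_one]
          _ = χc (∑ i : Fin p, d i) := (map_sum χc _ _).symm
          _ = 0 := by rw [hsd, map_zero]
      · rcases quadraticChar_dichotomy hm with hq | hq
        · -- nonzero square : use membership of c in the QR code
          have hQm := hcQ m ((sq_cond_iff m).mpr hq)
          have hterm : ∀ i : Fin p, (χc (d i) : K) * α ^ ((e i * m).val)
              = χc (c i.castSucc) * α ^ ((i : ℕ) * m.val)
                + χc cl * α ^ ((i : ℕ) * m.val) := by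
            intro i
            rw [az_mul hα, zmodFinEquiv_val]
            show (χc (c i.castSucc + cl) : K) * _ = _
            rw [map_add]
            ring
          rw [Finset.sum_congr rfl fun i _ => hterm i, Finset.sum_add_distrib,
            ← Finset.mul_sum, hQm, hgeo m hm, mul_zero, add_zero]
        · -- nonzero nonsquare : use duality with the shifted idempotents
          have hχm : quadraticChar (ZMod p) (-m) = -1 := by
            rw [show -m = -1 * m by ring, map_mul, chi_neg_one h8, hq, one_mul]
          have hmne : (-m : ZMod p) ≠ 0 := neg_ne_zero.mpr hm
          have hT : ∑ j : ZMod p, α ^ ((j * m).val)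
              * (∑ i : Fin p, (χc (E (e i - j)) : K) * χc (d i)) = 0 := by
            apply Finset.sum_eq_zero
            intro j _
            rw [hOrthK j, mul_zero]
          have hswap : ∑ j : ZMod p, α ^ ((j * m).val)
              * (∑ i : Fin p, (χc (E (e i - j)) : K) * χc (d i))
              = ∑ i : Fin p, ∑ j : ZMod p,
                  α ^ ((j * m).val) * ((χc (E (e i - j)) : K) * χc (d i)) := by
            rw [Finset.sum_congr rfl fun j _ => Finset.mul_sum _ _ _, Finset.sum_comm]
          have hinner : ∀ i : Fin p, ∑ j : ZMod p,
              α ^ ((j * m).val) * ((χc (E (e i - j)) : K) * χc (d i))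
              = (χc (d i) : K) * α ^ ((e i * m).val) := by
            intro i
            rw [← Equiv.sum_comp (Equiv.subLeft (e i))
              (fun j : ZMod p => α ^ ((j * m).val) * ((χc (E (e i - j)) : K) * χc (d i)))]
            have hterm : ∀ k : ZMod p,
                α ^ (((Equiv.subLeft (e i)) k * m).val)
                  * ((χc (E (e i - (Equiv.subLeft (e i)) k)) : K) * χc (d i))
                = ((χc (d i) : K) * α ^ ((e i * m).val))
                  * ((χc (E k) : K) * α ^ ((k * (-m)).val)) := by
              intro k
              simp only [Equiv.subLeft_apply, sub_sub_cancel]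
              have hsplit : α ^ (((e i - k) * m).val)
                  = α ^ ((e i * m).val) * α ^ ((k * (-m)).val) := by
                rw [← az_add hα]
                congr 1
                ring
              rw [hsplit]
              ring
            rw [Finset.sum_congr rfl fun k _ => hterm k, ← Finset.mul_sum,
              hFE (-m) hmne, if_neg (by rw [hχm]; norm_num), mul_one]
          have h := hT
          rw [hswap, Finset.sum_congr rfl fun i _ => hinner i] at h
          exact h
    -- invert the DFT : d = 0
    have hdz : ∀ t : Fin p, d t = 0 := by
      intro t
      have hU : ∑ m : ZMod p, (∑ i : Fin p, (χc (d i) : K) * α ^ ((e i * m).val))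
          * α ^ ((m * (- e t)).val) = 0 :=
        Finset.sum_eq_zero fun m _ => by rw [hD0 m, zero_mul]
      have h1 : ∀ m : ZMod p, (∑ i : Fin p, (χc (d i) : K) * α ^ ((e i * m).val))
          * α ^ ((m * (- e t)).val)
          = ∑ i : Fin p, (χc (d i) : K) * α ^ ((m * (e i - e t)).val) := by
        intro m
        rw [Finset.sum_mul]
        apply Finset.sum_congr rfl
        intro i _
        have hx : α ^ ((m * (e i - e t)).val)
            = α ^ ((e i * m).val) * α ^ ((m * (- e t)).val) := by
          rw [← az_add hα]
          congr 1
          ring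
        rw [hx]
        ring
      rw [Finset.sum_congr rfl fun m _ => h1 m, Finset.sum_comm] at hU
      have h2 : ∀ i : Fin p, ∑ m : ZMod p, (χc (d i) : K) * α ^ ((m * (e i - e t)).val)
          = if i = t then (χc (d i) : K) else 0 := by
        intro i
        rw [← Finset.mul_sum, az_dft hα hp1 (e i - e t)]
        by_cases h : i = t
        · subst h
          rw [if_pos (sub_self (e i)), if_pos rfl, hpK, mul_one]
        · rw [if_neg h, if_neg, mul_zero]
          intro hcon
          exact h (e.injective (sub_eq_zero.mp hcon))
      rw [Finset.sum_congr rfl fun i _ => h2 i,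
        Finset.sum_ite_eq' Finset.univ t (fun i => (χc (d i) : K)),
        if_pos (Finset.mem_univ t)] at hU
      have : χc (d t) = χc 0 := by rw [hU, map_zero]
      exact χc.injective this
    have hconst : ∀ i : Fin p, c i.castSucc = cl := by
      intro i
      have h : c i.castSucc + cl = 0 := hdz i
      have h2 : (2 : ZMod 2) = 0 := by decide
      linear_combination h - cl * h2
    have hcall : ∀ i : Fin (p + 1), c i = cl := by
      intro i
      refine Fin.lastCases ?_ ?_ i
      · rfl
      · exact hconst
    rcases (by decide : ∀ x : ZMod 2, x = 0 ∨ x = 1) cl with h | h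
    · left; funext i; rw [hcall i, h]; rfl
    · right; funext i; rw [hcall i, h]; rfl
  · -- easy direction
    rintro (rfl | rfl)
    · refine ⟨⟨?_, ?_⟩, ?_⟩
      · intro ℓ _
        simp
      · simp
      · intro x _
        simp
    · refine ⟨⟨?_, ?_⟩, ?_⟩
      · rintro ℓ ⟨m, hm0, hm2⟩
        have hℓ0 : ℓ ≠ 0 := by
          rw [← hm2]
          exact pow_ne_zero 2 hm0
        have hone : ∀ i : Fin p,
            (χc ((1 : Fin (p + 1) → ZMod 2) i.castSucc) : K) * α ^ ((i : ℕ) * ℓ.val)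
            = α ^ ((i : ℕ) * ℓ.val) := by
          intro i
          simp
        rw [Finset.sum_congr rfl fun i _ => hone i]
        exact hgeo ℓ hℓ0
      · have hsum : ∑ _i : Fin (p + 1), (1 : ZMod 2) = ((p + 1 : ℕ) : ZMod 2) := by
          rw [Finset.sum_const, Finset.card_univ, Fintype.card_fin, nsmul_eq_mul, mul_one]
        show ∑ _i : Fin (p + 1), (1 : ZMod 2) = 0
        rw [hsum, ZMod.natCast_eq_zero_iff]
        omega
      · intro x hx
        have := hx.2
        simpa using this
end

section
/- Let X = {1,…,n}, let G be a subgroup of S_n, and suppose the action of G on the set of t-element subsets of X has exactly two orbits GT_1 and GT_2 of equal size. Define the Reynolds operator R on ℝX_t by R(T) := (1/|G|) Σ_{σ∈G} T^σ. Then every f ∈ Harm_t^G is a real scalar multiple of R(T_1) − R(T_2); that is, the space Harm_t^G is at most one-dimensional and is contained in the span of R(T_1) − R(T_2). -/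
/-- The differentiation `γ`: for `y` of cardinality `k - 1`,
`(γ f)(y) = ∑_{z ⊇ y, |z| = |y| + 1} f(z)`. -/
def gammaD {n : ℕ} (f : Finset (Fin n) → ℝ) (y : Finset (Fin n)) : ℝ :=
  ∑ i ∈ yᶜ, f (insert i y)

/-- `f ∈ Harm_k`: a degree-`k` harmonic function, i.e. an element of `ℝX_k`
(a real-valued function supported on the `k`-element subsets) killed by `γ`. -/
def IsHarm {n : ℕ} (k : ℕ) (f : Finset (Fin n) → ℝ) : Prop :=
  (∀ s : Finset (Fin n), s.card ≠ k → f s = 0) ∧ ∀ y : Finset (Fin n), gammaD f y = 0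

/-- `f̃(u) = ∑_{z ⊆ u} f(z)`. -/
def ftilde {n : ℕ} (f : Finset (Fin n) → ℝ) (u : Finset (Fin n)) : ℝ :=
  ∑ z ∈ u.powerset, f z

/-- The Reynolds operator applied to a `t`-subset `T`:
`R(T) = (1/|G|) ∑_{σ ∈ G} T^σ`, as an element of `ℝX_t`. -/
noncomputable def reynolds {n : ℕ} (G : Subgroup (Equiv.Perm (Fin n))) (T : Finset (Fin n))
    (s : Finset (Fin n)) : ℝ :=
  (1 / (Nat.card G : ℝ)) *
    (Nat.card {σ : G | T.image (σ : Equiv.Perm (Fin n)) = s} : ℝ)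

private lemma image_inv_image' {n : ℕ} (g : Equiv.Perm (Fin n)) (T : Finset (Fin n)) :
    (T.image ⇑g).image ⇑g⁻¹ = T := by
  ext x; simp

private lemma image_perm_mul' {n : ℕ} (g h : Equiv.Perm (Fin n)) (T : Finset (Fin n)) :
    T.image ⇑(g * h) = (T.image ⇑h).image ⇑g := by
  rw [Finset.image_image]; rfl

private lemma fiber_card_eq' {n : ℕ} (G : Subgroup (Equiv.Perm (Fin n))) [Fintype G]
    (T s s' : Finset (Fin n))
    (τ τ' : G) (hτ : T.image ↑τ = s) (hτ' : T.image ↑τ' = s') :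
    (Finset.univ.filter (fun σ : G => T.image ↑σ = s)).card
      = (Finset.univ.filter (fun σ : G => T.image ↑σ = s')).card := by
  classical
  apply Finset.card_bij' (fun σ _ => τ' * τ⁻¹ * σ) (fun σ _ => τ * τ'⁻¹ * σ)
  · intro σ hσ
    simp only [Finset.mem_filter, Finset.mem_univ, true_and] at hσ ⊢
    have h1 : ((τ' * τ⁻¹ * σ : G) : Equiv.Perm (Fin n)) = ↑τ' * (↑τ)⁻¹ * ↑σ := rfl
    rw [h1, image_perm_mul', image_perm_mul', hσ, ← hτ, image_inv_image', hτ']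
  · intro σ hσ
    simp only [Finset.mem_filter, Finset.mem_univ, true_and] at hσ ⊢
    have h1 : ((τ * τ'⁻¹ * σ : G) : Equiv.Perm (Fin n)) = ↑τ * (↑τ')⁻¹ * ↑σ := rfl
    rw [h1, image_perm_mul', image_perm_mul', hσ, ← hτ', image_inv_image', hτ]
  · intro σ hσ; group
  · intro σ hσ; group

private lemma sum_gamma' {n : ℕ} (f : Finset (Fin n) → ℝ) :
    ∑ y : Finset (Fin n), gammaD f y = ∑ z : Finset (Fin n), (z.card : ℝ) * f z := by
  classical
  unfold gammaD
  rw [Finset.sum_sigma']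
  have : ∀ z : Finset (Fin n), (z.card : ℝ) * f z = ∑ _i ∈ z, f z := by
    intro z; rw [Finset.sum_const, nsmul_eq_mul]
  rw [Finset.sum_congr rfl fun z _ => this z, Finset.sum_sigma']
  apply Finset.sum_bij' (fun p _ => (⟨insert p.2 p.1, p.2⟩ : Σ _z : Finset (Fin n), Fin n))
    (fun p _ => (⟨p.1.erase p.2, p.2⟩ : Σ _y : Finset (Fin n), Fin n))
  · intro p hp
    simp only [Finset.mem_sigma, Finset.mem_univ, Finset.mem_compl, true_and] at hp ⊢
    exact Finset.mem_insert_self _ _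
  · intro p hp
    simp only [Finset.mem_sigma, Finset.mem_univ, Finset.mem_compl, true_and] at hp ⊢
    exact Finset.notMem_erase _ _
  · intro p hp
    simp only [Finset.mem_sigma, Finset.mem_univ, Finset.mem_compl, true_and] at hp
    simp [Finset.erase_insert hp]
  · intro p hp
    simp only [Finset.mem_sigma, Finset.mem_univ, true_and] at hp
    simp [Finset.insert_erase hp]
  · intro p hp; rfl

/-- If a subgroup `G ≤ Sₙ` has exactly two orbits `GT₁ ⊔ GT₂` of equal
size on `t`-element subsets of `{1,…,n}`, then every `G`-invariant degree-`t` harmonic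
function is a real scalar multiple of `R(T₁) - R(T₂)`. -/
theorem harm_invariant_eq_reynolds_diff {n t : ℕ} (G : Subgroup (Equiv.Perm (Fin n)))
    (T₁ T₂ : Finset (Fin n)) (hT₁ : T₁.card = t) (hT₂ : T₂.card = t)
    (hcover : ∀ T : Finset (Fin n), T.card = t →
      T ∈ orbitT (↑G) T₁ ∨ T ∈ orbitT (↑G) T₂)
    (hdisj : Disjoint (orbitT (↑G : Set (Equiv.Perm (Fin n))) T₁)
      (orbitT (↑G : Set (Equiv.Perm (Fin n))) T₂))
    (hsize : Nat.card (orbitT (↑G : Set (Equiv.Perm (Fin n))) T₁)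
      = Nat.card (orbitT (↑G : Set (Equiv.Perm (Fin n))) T₂)) :
    ∀ f : Finset (Fin n) → ℝ, IsHarm t f →
      (∀ σ ∈ G, ∀ s : Finset (Fin n), f (s.image σ) = f s) →
      ∃ c : ℝ, f = fun s => c * (reynolds G T₁ s - reynolds G T₂ s) := by
  classical
  intro f hf hGf
  obtain ⟨hsupp, hharm⟩ := hf
  rcases Nat.eq_zero_or_pos t with rfl | ht
  · rw [Finset.card_eq_zero] at hT₁ hT₂
    subst hT₁; subst hT₂
    have h0 : (∅ : Finset (Fin n)) ∈ orbitT (↑G : Set (Equiv.Perm (Fin n))) ∅ :=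
      ⟨1, G.one_mem, by simp⟩
    exact (Set.disjoint_left.mp hdisj h0 h0).elim
  haveI : Fintype G := Fintype.ofFinite _
  set O₁ : Finset (Finset (Fin n)) :=
    Finset.univ.filter (· ∈ orbitT (↑G : Set (Equiv.Perm (Fin n))) T₁) with hO₁def
  set O₂ : Finset (Finset (Fin n)) :=
    Finset.univ.filter (· ∈ orbitT (↑G : Set (Equiv.Perm (Fin n))) T₂) with hO₂def
  have hmem₁ : ∀ z, z ∈ O₁ ↔ z ∈ orbitT (↑G : Set (Equiv.Perm (Fin n))) T₁ := by
    intro z; simp [hO₁def]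
  have hmem₂ : ∀ z, z ∈ O₂ ↔ z ∈ orbitT (↑G : Set (Equiv.Perm (Fin n))) T₂ := by
    intro z; simp [hO₂def]
  have hncard : ∀ (T : Finset (Fin n)) (O : Finset (Finset (Fin n))),
      (∀ z, z ∈ O ↔ z ∈ orbitT (↑G : Set (Equiv.Perm (Fin n))) T) →
      Nat.card (orbitT (↑G : Set (Equiv.Perm (Fin n))) T) = O.card := by
    intro T O hO
    have : orbitT (↑G : Set (Equiv.Perm (Fin n))) T = ↑O := by
      ext z; rw [Finset.mem_coe, hO]
    rw [this, Nat.card_coe_set_eq, Set.ncard_coe_finset]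
  have hsize' : O₁.card = O₂.card := by
    rw [← hncard T₁ O₁ hmem₁, ← hncard T₂ O₂ hmem₂]; exact hsize
  have hT₁O : T₁ ∈ O₁ := (hmem₁ T₁).mpr ⟨1, G.one_mem, by simp⟩
  have hcard₁pos : 0 < O₁.card := Finset.card_pos.mpr ⟨T₁, hT₁O⟩
  -- sum of f over everything vanishes
  have hfsum : ∑ z : Finset (Fin n), f z = 0 := by
    have h1 : ∑ y : Finset (Fin n), gammaD f y = 0 := by simp [hharm]
    rw [sum_gamma' f] at h1
    have h2 : ∑ z : Finset (Fin n), (z.card : ℝ) * f z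
        = (t : ℝ) * ∑ z : Finset (Fin n), f z := by
      rw [Finset.mul_sum]
      refine Finset.sum_congr rfl fun z _ => ?_
      by_cases hz : z.card = t
      · rw [hz]
      · rw [hsupp z hz, mul_zero, mul_zero]
    rw [h2, mul_eq_zero] at h1
    exact h1.resolve_left (by exact_mod_cast ht.ne')
  have hfconst : ∀ (T z : Finset (Fin n)),
      z ∈ orbitT (↑G : Set (Equiv.Perm (Fin n))) T → f z = f T := by
    rintro T z ⟨σ, hσ, rfl⟩
    exact hGf σ hσ T
  have hdisjF : Disjoint O₁ O₂ := by
    rw [Finset.disjoint_left]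
    intro z h1 h2
    exact Set.disjoint_left.mp hdisj ((hmem₁ z).mp h1) ((hmem₂ z).mp h2)
  have hsplit : f T₁ * (O₁.card : ℝ) + f T₂ * (O₂.card : ℝ) = 0 := by
    have e1 : ∑ z : Finset (Fin n), f z = ∑ z ∈ O₁ ∪ O₂, f z := by
      refine (Finset.sum_subset (Finset.subset_univ _) fun z _ hz => ?_).symm
      refine hsupp z fun hc => ?_
      rcases hcover z hc with h | h
      · exact hz (Finset.mem_union_left _ ((hmem₁ z).mpr h))
      · exact hz (Finset.mem_union_right _ ((hmem₂ z).mpr h))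
    have e2 : ∑ z ∈ O₁, f z = f T₁ * (O₁.card : ℝ) := by
      rw [Finset.sum_congr rfl fun z hz => hfconst T₁ z ((hmem₁ z).mp hz), Finset.sum_const,
        nsmul_eq_mul, mul_comm]
    have e3 : ∑ z ∈ O₂, f z = f T₂ * (O₂.card : ℝ) := by
      rw [Finset.sum_congr rfl fun z hz => hfconst T₂ z ((hmem₂ z).mp hz), Finset.sum_const,
        nsmul_eq_mul, mul_comm]
    rw [e1, Finset.sum_union hdisjF, e2, e3] at hfsum
    exact hfsum
  have hb : f T₂ = - f T₁ := by
    have hc2 : ((O₂.card : ℕ) : ℝ) ≠ 0 := by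
      rw [← hsize']; exact_mod_cast hcard₁pos.ne'
    rw [hsize'] at hsplit
    have h4 : (f T₁ + f T₂) * ((O₂.card : ℕ) : ℝ) = 0 := by rw [add_mul]; exact hsplit
    have := (mul_eq_zero.mp h4).resolve_right hc2
    linarith
  -- orbit counting
  have hcount : ∀ (T : Finset (Fin n)) (O : Finset (Finset (Fin n))),
      (∀ z, z ∈ O ↔ z ∈ orbitT (↑G : Set (Equiv.Perm (Fin n))) T) → ∀ s ∈ O,
      (Finset.univ.filter (fun σ : G => T.image ↑σ = s)).card * O.card = Fintype.card G := by
    intro T O hO s hs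
    obtain ⟨ρ, hρG, hρ⟩ := (hO s).mp hs
    have hfib : ∀ s' ∈ O,
        (Finset.univ.filter (fun σ : G => T.image ↑σ = s')).card
          = (Finset.univ.filter (fun σ : G => T.image ↑σ = s)).card := by
      intro s' hs'
      obtain ⟨τ, hτG, hτ⟩ := (hO s').mp hs'
      exact fiber_card_eq' G T s' s ⟨τ, hτG⟩ ⟨ρ, hρG⟩ hτ hρ
    have htot : (Finset.univ : Finset G).card
        = ∑ s' ∈ O, (Finset.univ.filter (fun σ : G => T.image ↑σ = s')).card := by
      apply Finset.card_eq_sum_card_fiberwise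
      intro σ _
      exact (hO _).mpr ⟨↑σ, σ.2, rfl⟩
    rw [← Finset.card_univ, htot, Finset.sum_congr rfl hfib, Finset.sum_const, smul_eq_mul,
      mul_comm]
  have hrey : ∀ (T s : Finset (Fin n)), reynolds G T s
      = ((Finset.univ.filter (fun σ : G => T.image ↑σ = s)).card : ℝ)
        / (Fintype.card G : ℝ) := by
    intro T s
    have hset : {σ : G | T.image (σ : Equiv.Perm (Fin n)) = s}
        = ↑(Finset.univ.filter (fun σ : G => T.image ↑σ = s)) := by
      ext σ; simp
    unfold reynolds
    rw [hset, Nat.card_coe_set_eq, Set.ncard_coe_finset, Nat.card_eq_fintype_card,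
      one_div, inv_mul_eq_div]
  have hrey0 : ∀ (T s : Finset (Fin n)), s ∉ orbitT (↑G : Set (Equiv.Perm (Fin n))) T →
      reynolds G T s = 0 := by
    intro T s hs
    rw [hrey]
    have : Finset.univ.filter (fun σ : G => T.image ↑σ = s) = ∅ := by
      rw [Finset.filter_eq_empty_iff]
      intro σ _
      exact fun h => hs ⟨↑σ, σ.2, h⟩
    rw [this]; simp
  have hGne : (Fintype.card G : ℝ) ≠ 0 := by exact_mod_cast Fintype.card_pos.ne'
  refine ⟨f T₁ * (O₁.card : ℝ), ?_⟩
  funext s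
  by_cases hs₁ : s ∈ orbitT (↑G : Set (Equiv.Perm (Fin n))) T₁
  · have hs₂ : s ∉ orbitT (↑G : Set (Equiv.Perm (Fin n))) T₂ := Set.disjoint_left.mp hdisj hs₁
    have hc : ((Finset.univ.filter (fun σ : G => T₁.image ↑σ = s)).card : ℝ) * (O₁.card : ℝ)
        = (Fintype.card G : ℝ) := by
      exact_mod_cast congrArg (Nat.cast (R := ℝ)) (hcount T₁ O₁ hmem₁ s ((hmem₁ s).mpr hs₁))
    rw [hfconst T₁ s hs₁, hrey T₁ s, hrey0 T₂ s hs₂]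
    field_simp
    linear_combination (-(f T₁)) * hc
  · by_cases hs₂ : s ∈ orbitT (↑G : Set (Equiv.Perm (Fin n))) T₂
    · have hc : ((Finset.univ.filter (fun σ : G => T₂.image ↑σ = s)).card : ℝ) * (O₂.card : ℝ)
          = (Fintype.card G : ℝ) := by
        exact_mod_cast congrArg (Nat.cast (R := ℝ)) (hcount T₂ O₂ hmem₂ s ((hmem₂ s).mpr hs₂))
      rw [hfconst T₂ s hs₂, hb, hrey0 T₁ s hs₁, hrey T₂ s, hsize']
      field_simp
      linear_combination (f T₁) * hc
    · rw [hsupp s fun hc => (hcover s hc).elim hs₁ hs₂, hrey0 T₁ s hs₁, hrey0 T₂ s hs₂]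
      ring
end
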